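/- arXiv:0911.4347 — 7 statements merged into one kernel-verified Lean document; each statement's English description precedes it below -/
import Mathlib

section
/- Let V be a normed vector space, x₀ ∈ V, and Φ : V → (−∞,∞] a positively homogeneous convex function satisfying liminf_{‖x−x₀‖→0} Φ(x) ≥ Φ(x₀). If Φ(x₀) < ∞ then for each ε > 0 there exists a continuous linear functional v : V → ℝ with Φ(x₀) − ε ≤ v(x₀) and v(x) ≤ Φ(x) for all x ∈ V. -/
open Filter

theorem stmt2
    {V : Type*} [NormedAddCommGroup V] [NormedSpace ℝ V]
    (Φ : V → EReal) (hbot : ∀ x, Φ x ≠ ⊥)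
    (hhom : ∀ (t : ℝ), 0 ≤ t → ∀ x, Φ (t • x) = (t : EReal) * Φ x)
    (hconv : ∀ x y (a b : ℝ), 0 ≤ a → 0 ≤ b → a + b = 1 →
      Φ (a • x + b • y) ≤ (a : EReal) * Φ x + (b : EReal) * Φ y)
    (x₀ : V) (hlsc : Φ x₀ ≤ liminf Φ (nhds x₀))
    (hfin : Φ x₀ < ⊤) (ε : ℝ) (hε : 0 < ε) :
    ∃ v : V →L[ℝ] ℝ, Φ x₀ - (ε : EReal) ≤ (v x₀ : EReal) ∧ ∀ x, (v x : EReal) ≤ Φ x := by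
  obtain ⟨r, hr⟩ : ∃ r : ℝ, Φ x₀ = (r : EReal) :=
    ⟨(Φ x₀).toReal, (EReal.coe_toReal hfin.ne (hbot x₀)).symm⟩
  -- local lower bound from lsc
  have hev : ∀ᶠ x in nhds x₀, ((r - ε : ℝ) : EReal) < Φ x := by
    apply Filter.eventually_lt_of_lt_liminf (lt_of_lt_of_le ?_ hlsc)
    rw [hr]
    exact_mod_cast sub_lt_self r hε
  obtain ⟨δ, hδ, hball⟩ := Metric.eventually_nhds_iff.mp hev
  set Ep : Set (V × ℝ) := {p | Φ p.1 ≤ (p.2 : EReal)} with hEp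
  set U : Set (V × ℝ) := Metric.ball x₀ δ ×ˢ Set.Iio (r - ε) with hUdef
  have hUopen : IsOpen U := Metric.isOpen_ball.prod isOpen_Iio
  have hUconv : Convex ℝ U := (convex_ball x₀ δ).prod (convex_Iio _)
  have hEconv : Convex ℝ Ep := by
    rintro p hp q hq a b ha hb hab
    simp only [hEp, Set.mem_setOf_eq, Prod.smul_fst, Prod.smul_snd, Prod.fst_add, Prod.snd_add,
      smul_eq_mul] at *
    calc Φ (a • p.1 + b • q.1) ≤ (a : EReal) * Φ p.1 + (b : EReal) * Φ q.1 :=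
          hconv _ _ a b ha hb hab
      _ ≤ (a : EReal) * (p.2 : EReal) + (b : EReal) * (q.2 : EReal) :=
          add_le_add (mul_le_mul_of_nonneg_left hp (by exact_mod_cast ha))
            (mul_le_mul_of_nonneg_left hq (by exact_mod_cast hb))
      _ = ((a * p.2 + b * q.2 : ℝ) : EReal) := by push_cast; ring
  have hdisj : Disjoint U Ep := by
    rw [Set.disjoint_left]
    rintro ⟨x, t⟩ ⟨hx, ht⟩ hE
    have h1 : ((r - ε : ℝ) : EReal) < Φ x := hball (by simpa [dist_eq_norm] using hx)
    have h2 : Φ x ≤ (t : EReal) := hE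
    have : (t : EReal) < ((r - ε : ℝ) : EReal) := by exact_mod_cast ht
    exact absurd (h2.trans_lt this) h1.asymm
  obtain ⟨f, u, hU, hE⟩ := geometric_hahn_banach_open hUconv hUopen hEconv hdisj
  have hΦ0 : Φ 0 = 0 := by
    have := hhom 0 le_rfl 0
    simpa using this
  have hu0 : u ≤ 0 := by
    have := hE (0, 0) (by simp [hEp, hΦ0])
    rwa [Prod.mk_zero_zero, map_zero] at this
  -- the epigraph is a cone, so f is nonneg on it
  have hEnn : ∀ p ∈ Ep, 0 ≤ f p := by
    intro p hp
    by_contra h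
    push_neg at h
    set lam : ℝ := (u - 1) / f p with hlam
    have hlampos : 0 < lam := div_pos_iff.mpr (Or.inr ⟨by linarith, h⟩)
    have hmem : lam • p ∈ Ep := by
      simp only [hEp, Set.mem_setOf_eq, Prod.smul_fst, Prod.smul_snd, smul_eq_mul] at *
      rw [hhom lam hlampos.le, EReal.coe_mul]
      exact mul_le_mul_of_nonneg_left hp (by exact_mod_cast hlampos.le)
    have := hE _ hmem
    rw [map_smul, smul_eq_mul, hlam, div_mul_cancel₀ _ (ne_of_lt h)] at this
    linarith
  set a : V →L[ℝ] ℝ := f.comp (ContinuousLinearMap.inl ℝ V ℝ) with ha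
  set c : ℝ := f (0, 1) with hc
  have hdec : ∀ (x : V) (t : ℝ), f (x, t) = a x + t * c := by
    intro x t
    have : (x, t) = (x, (0 : ℝ)) + t • ((0 : V), (1 : ℝ)) := by
      simp [Prod.ext_iff]
    rw [this, map_add, map_smul, smul_eq_mul]
    rfl
  have hx₀mem : ∀ t : ℝ, t < r - ε → a x₀ + t * c < u := by
    intro t ht
    have := hU (x₀, t) ⟨Metric.mem_ball_self hδ, ht⟩
    rwa [hdec] at this
  have hcne : c ≠ 0 := by
    intro h0
    have h1 := hx₀mem (r - ε - 1) (by linarith)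
    have h2 := hE (x₀, r) (by simp [hEp, hr])
    rw [hdec] at h2
    rw [h0] at h1 h2
    simp only [mul_zero, add_zero] at h1 h2
    linarith
  have hcnonneg : 0 ≤ c := by
    by_contra h
    push_neg at h
    have h1 := hx₀mem (min (r - ε - 1) ((u - a x₀) / c))
      (lt_of_le_of_lt (min_le_left _ _) (by linarith))
    have h2 : min (r - ε - 1) ((u - a x₀) / c) ≤ (u - a x₀) / c := min_le_right _ _
    have h3 : (u - a x₀) / c * c = u - a x₀ := div_mul_cancel₀ _ h.ne
    nlinarith [mul_le_mul_of_nonpos_right h2 h.le]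
  have hcpos : 0 < c := lt_of_le_of_ne hcnonneg (Ne.symm hcne)
  refine ⟨(-(1 / c)) • a, ?_, ?_⟩
  · -- value at x₀
    have key : a x₀ + (r - ε) * c ≤ u := by
      by_contra h
      push_neg at h
      set q : ℝ := a x₀ + (r - ε) * c - u with hq
      have hqpos : 0 < q := by linarith
      have := hx₀mem (r - ε - q / c) (sub_lt_self _ (div_pos hqpos hcpos))
      have hqc : q / c * c = q := div_mul_cancel₀ _ hcne
      nlinarith
    have : r - ε ≤ (-(1 / c)) • a x₀ := by
      simp only [smul_eq_mul]
      rw [neg_mul, one_div, inv_mul_eq_div, ← neg_div, le_div_iff₀ hcpos]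
      linarith
    rw [hr, show ((r : EReal) - (ε : ℝ)) = ((r - ε : ℝ) : EReal) from (EReal.coe_sub r ε)]
    exact_mod_cast this
  · intro x
    rcases eq_or_ne (Φ x) ⊤ with htop | htop
    · rw [htop]; exact le_top
    obtain ⟨s, hs⟩ : ∃ s : ℝ, Φ x = (s : EReal) := ⟨(Φ x).toReal, (EReal.coe_toReal htop (hbot x)).symm⟩
    have hmem : ((x, s) : V × ℝ) ∈ Ep := by simp [hEp, hs]
    have h1 : 0 ≤ a x + s * c := by
      have := hEnn _ hmem
      rwa [hdec] at this
    have : (-(1 / c)) • a x ≤ s := by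
      simp only [smul_eq_mul]
      rw [neg_mul, one_div, inv_mul_eq_div, ← neg_div, div_le_iff₀ hcpos]
      linarith
    rw [hs]
    exact_mod_cast this
end

section
/- Jensen-type mass bound: let π be a finite nonnegative measure on X × Y with marginals f·μ and g·ν where ‖f−1‖_{L¹(μ)} < γ and ‖g−1‖_{L¹(ν)} < γ for some γ ∈ (0,1). Define the measure π̃ by dπ̃/dπ(x,y) = 1/((1+|f(x)−1|)(1+|g(y)−1|)). Then π̃ ≤ π, its X-projection is ≤ μ, its Y-projection is ≤ ν, and ‖π̃‖ ≥ (1−γ)/(1+γ/(1−γ))² ≥ (1−γ)³. -/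
open MeasureTheory ENNReal

lemma alg1 (e A L D : ℝ) (he : 0 < e) (hA0 : 0 ≤ A) (heA : e + A ≤ 1)
    (heL : e ≤ L) (hLpos : 0 < L) (hD : D ≤ L + A) : e * D ≤ L := by
  nlinarith [mul_nonneg (sub_nonneg.2 heL) hA0, mul_nonneg hLpos.le (by linarith : (0:ℝ) ≤ 1 - e - A)]

lemma tangent3 (s t σ τ : ℝ) (hs : 0 < s) (ht : 0 < t) (hσ : 0 < σ) (hτ : 0 < τ) :
    (3 - s/σ - t/τ) / (σ*τ) ≤ 1/(s*t) := by
  rw [div_le_div_iff₀ (by positivity) (by positivity)]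
  have key : 3*(s*t*σ*τ) ≤ σ^2*τ^2 + s^2*t*τ + s*t^2*σ := by
    nlinarith [sq_nonneg (σ*τ - s*t), sq_nonneg (s-σ), sq_nonneg (t-τ), mul_pos hs ht,
      mul_pos hσ hτ, sq_nonneg (s*t - s*τ), sq_nonneg (s*τ - σ*τ),
      mul_pos (mul_pos hs ht) hτ, mul_pos (mul_pos hs ht) hσ]
  have h1 : (3 - s/σ - t/τ) * (s*t) * (σ*τ) ≤ 1*(σ*τ)*(σ*τ) := by
    have : (3 - s/σ - t/τ) * (s*t) * (σ*τ) = 3*(s*t*σ*τ) - s^2*t*τ - s*t^2*σ := by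
      field_simp
    rw [this]; nlinarith [key]
  exact le_of_mul_le_mul_right h1 (mul_pos hσ hτ)

set_option maxHeartbeats 2000000 in
theorem main_meas {X Y : Type*} [MeasurableSpace X] [MeasurableSpace Y]
    (μ : Measure X) (ν : Measure Y) [IsProbabilityMeasure μ] [IsProbabilityMeasure ν]
    (f : X → ℝ) (g : Y → ℝ) (hfm : Measurable f) (hgm : Measurable g)
    (hf0 : ∀ x, 0 ≤ f x) (hg0 : ∀ y, 0 ≤ g y)
    (hfint : Integrable f μ) (hgint : Integrable g ν)
    (π : Measure (X × Y)) [IsFiniteMeasure π]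
    (hfst : π.fst = μ.withDensity (fun x => ENNReal.ofReal (f x)))
    (hsnd : π.snd = ν.withDensity (fun y => ENNReal.ofReal (g y)))
    (γ : ℝ) (hγ0 : 0 < γ) (hγ1 : γ < 1)
    (hfγ : ∫ x, |f x - 1| ∂μ ≤ γ) (hgγ : ∫ y, |g y - 1| ∂ν ≤ γ) :
    ENNReal.ofReal ((1 - γ) ^ 3) ≤
      (π.withDensity (fun p => ENNReal.ofReal (1 / ((1 + |f p.1 - 1|) * (1 + |g p.2 - 1|))))) Set.univ := by
  -- ## basic pointwise objects
  set F : X → ℝ := fun x => max (f x) 1 with hFdef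
  set G : Y → ℝ := fun y => max (g y) 1 with hGdef
  set m : X → ℝ := fun x => min (f x) 1 with hmdef
  set n : Y → ℝ := fun y => min (g y) 1 with hndef
  set k : X × Y → ℝ := fun p => (F p.1)⁻¹ * (G p.2)⁻¹ with hkdef
  set w : X × Y → ℝ := fun p => 1 / ((1 + |f p.1 - 1|) * (1 + |g p.2 - 1|)) with hwdef
  have hF1 : ∀ x, 1 ≤ F x := fun x => le_max_right _ _
  have hG1 : ∀ y, 1 ≤ G y := fun y => le_max_right _ _
  have hFpos : ∀ x, 0 < F x := fun x => lt_of_lt_of_le one_pos (hF1 x)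
  have hGpos : ∀ y, 0 < G y := fun y => lt_of_lt_of_le one_pos (hG1 y)
  have hFinv_pos : ∀ x, 0 < (F x)⁻¹ := fun x => inv_pos.2 (hFpos x)
  have hGinv_pos : ∀ y, 0 < (G y)⁻¹ := fun y => inv_pos.2 (hGpos y)
  have hFinv_le1 : ∀ x, (F x)⁻¹ ≤ 1 := fun x => inv_le_one_of_one_le₀ (hF1 x)
  have hGinv_le1 : ∀ y, (G y)⁻¹ ≤ 1 := fun y => inv_le_one_of_one_le₀ (hG1 y)
  have hm0 : ∀ x, 0 ≤ m x := fun x => le_min (hf0 x) zero_le_one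
  have hm1 : ∀ x, m x ≤ 1 := fun x => min_le_right _ _
  have hn0 : ∀ y, 0 ≤ n y := fun y => le_min (hg0 y) zero_le_one
  have hn1 : ∀ y, n y ≤ 1 := fun y => min_le_right _ _
  have hk0 : ∀ p, 0 ≤ k p := fun p => le_of_lt (mul_pos (hFinv_pos p.1) (hGinv_pos p.2))
  have hk1 : ∀ p, k p ≤ 1 := fun p =>
    mul_le_one₀ (hFinv_le1 p.1) (le_of_lt (hGinv_pos p.2)) (hGinv_le1 p.2)
  have hFm : ∀ x, (F x)⁻¹ * f x = m x := by
    intro x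
    rcases le_total (f x) 1 with h | h
    · rw [hFdef, hmdef]; simp only []
      rw [max_eq_right h, min_eq_left h, inv_one, one_mul]
    · rw [hFdef, hmdef]; simp only []
      rw [max_eq_left h, min_eq_right h]
      exact inv_mul_cancel₀ (ne_of_gt (lt_of_lt_of_le one_pos h))
  have hGn : ∀ y, (G y)⁻¹ * g y = n y := by
    intro y
    rcases le_total (g y) 1 with h | h
    · rw [hGdef, hndef]; simp only []
      rw [max_eq_right h, min_eq_left h, inv_one, one_mul]
    · rw [hGdef, hndef]; simp only []
      rw [max_eq_left h, min_eq_right h]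
      exact inv_mul_cancel₀ (ne_of_gt (lt_of_lt_of_le one_pos h))
  -- decomposition of the density
  have habs_id : ∀ c : ℝ, 0 ≤ c → 1 + |c - 1| = (2 - min c 1) * max c 1 := by
    intro c hc
    rcases le_total c 1 with h | h
    · rw [abs_of_nonpos (by linarith), min_eq_left h, max_eq_right h]; ring
    · rw [abs_of_nonneg (by linarith), min_eq_right h, max_eq_left h]; ring
  have hw_eq : ∀ p, w p = k p * (1 / ((2 - m p.1) * (2 - n p.2))) := by
    intro p
    rw [hwdef, hkdef]; simp only []
    rw [habs_id (f p.1) (hf0 p.1), habs_id (g p.2) (hg0 p.2)]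
    have h1 : max (f p.1) 1 ≠ 0 := ne_of_gt (hFpos p.1)
    have h2 : max (g p.2) 1 ≠ 0 := ne_of_gt (hGpos p.2)
    simp only [hFdef, hGdef, hmdef, hndef]
    field_simp
  have hw0 : ∀ p, 0 ≤ w p := by
    intro p
    have := abs_nonneg (f p.1 - 1); have := abs_nonneg (g p.2 - 1)
    positivity
  -- measurability
  have hFmeas : Measurable F := hfm.max measurable_const
  have hGmeas : Measurable G := hgm.max measurable_const
  have hmmeas : Measurable m := hfm.min measurable_const
  have hnmeas : Measurable n := hgm.min measurable_const
  have hFinvmeas : Measurable fun x => (F x)⁻¹ := hFmeas.inv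
  have hGinvmeas : Measurable fun y => (G y)⁻¹ := hGmeas.inv
  have hkmeas : Measurable k := (hFinvmeas.comp measurable_fst).mul (hGinvmeas.comp measurable_snd)
  have hwmeas : Measurable w := by
    apply Measurable.div measurable_const
    exact ((((hfm.comp measurable_fst).sub measurable_const).abs.const_add 1).mul
      (((hgm.comp measurable_snd).sub measurable_const).abs.const_add 1))
  -- integrability helpers
  have ibd : ∀ (h : X × Y → ℝ), Measurable h → (∀ p, |h p| ≤ 1) → Integrable h π := by
    intro h hm hb
    exact (integrable_const (1 : ℝ)).mono' hm.aestronglyMeasurable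
      (ae_of_all _ fun p => by simpa [Real.norm_eq_abs] using hb p)
  have ibdμ : ∀ (h : X → ℝ), Measurable h → (∀ x, |h x| ≤ 1) → Integrable h μ := by
    intro h hm hb
    exact (integrable_const (1 : ℝ)).mono' hm.aestronglyMeasurable
      (ae_of_all _ fun x => by simpa [Real.norm_eq_abs] using hb x)
  have ibdν : ∀ (h : Y → ℝ), Measurable h → (∀ y, |h y| ≤ 1) → Integrable h ν := by
    intro h hm hb
    exact (integrable_const (1 : ℝ)).mono' hm.aestronglyMeasurable
      (ae_of_all _ fun y => by simpa [Real.norm_eq_abs] using hb y)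
  -- marginal transfer
  have fst_int : ∀ (h : X → ℝ), Measurable h → (∀ x, 0 ≤ h x) → (∀ x, h x ≤ 1) →
      ∫ p, h p.1 ∂π = ∫ x, h x * f x ∂μ := by
    intro h hm h0 h1
    have hπint : Integrable (fun p : X × Y => h p.1) π :=
      ibd _ (hm.comp measurable_fst) fun p => abs_le.2 ⟨by linarith [h0 p.1], h1 p.1⟩
    have hμint : Integrable (fun x => h x * f x) μ :=
      hfint.bdd_mul (c := 1) hm.aestronglyMeasurable (ae_of_all _ fun x => by
        rw [Real.norm_eq_abs]; exact abs_le.2 ⟨by linarith [h0 x], h1 x⟩)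
    have e1 : ENNReal.ofReal (∫ p, h p.1 ∂π) = ∫⁻ p, ENNReal.ofReal (h p.1) ∂π :=
      ofReal_integral_eq_lintegral_ofReal hπint (ae_of_all _ fun (p : X × Y) => h0 p.1)
    have e2 : ENNReal.ofReal (∫ x, h x * f x ∂μ) = ∫⁻ x, ENNReal.ofReal (h x * f x) ∂μ :=
      ofReal_integral_eq_lintegral_ofReal hμint (ae_of_all _ fun x => mul_nonneg (h0 x) (hf0 x))
    have e3 : ∫⁻ p, ENNReal.ofReal (h p.1) ∂π = ∫⁻ x, ENNReal.ofReal (h x) ∂π.fst := by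
      rw [Measure.fst, lintegral_map hm.ennreal_ofReal measurable_fst]
    have e4 : ∫⁻ x, ENNReal.ofReal (h x) ∂π.fst = ∫⁻ x, ENNReal.ofReal (h x * f x) ∂μ := by
      rw [hfst, lintegral_withDensity_eq_lintegral_mul μ hfm.ennreal_ofReal hm.ennreal_ofReal]
      congr 1
      funext x
      simp only [Pi.mul_apply]
      rw [← ofReal_mul (hf0 x), mul_comm]
    have := e1.trans (e3.trans (e4.trans e2.symm))
    exact (ENNReal.ofReal_eq_ofReal_iff (integral_nonneg fun (p : X × Y) => h0 p.1)
      (integral_nonneg fun x => mul_nonneg (h0 x) (hf0 x))).1 this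
  have snd_int : ∀ (h : Y → ℝ), Measurable h → (∀ y, 0 ≤ h y) → (∀ y, h y ≤ 1) →
      ∫ p, h p.2 ∂π = ∫ y, h y * g y ∂ν := by
    intro h hm h0 h1
    have hπint : Integrable (fun p : X × Y => h p.2) π :=
      ibd _ (hm.comp measurable_snd) fun p => abs_le.2 ⟨by linarith [h0 p.2], h1 p.2⟩
    have hνint : Integrable (fun y => h y * g y) ν :=
      hgint.bdd_mul (c := 1) hm.aestronglyMeasurable (ae_of_all _ fun y => by
        rw [Real.norm_eq_abs]; exact abs_le.2 ⟨by linarith [h0 y], h1 y⟩)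
    have e1 : ENNReal.ofReal (∫ p, h p.2 ∂π) = ∫⁻ p, ENNReal.ofReal (h p.2) ∂π :=
      ofReal_integral_eq_lintegral_ofReal hπint (ae_of_all _ fun (p : X × Y) => h0 p.2)
    have e2 : ENNReal.ofReal (∫ y, h y * g y ∂ν) = ∫⁻ y, ENNReal.ofReal (h y * g y) ∂ν :=
      ofReal_integral_eq_lintegral_ofReal hνint (ae_of_all _ fun y => mul_nonneg (h0 y) (hg0 y))
    have e3 : ∫⁻ p, ENNReal.ofReal (h p.2) ∂π = ∫⁻ y, ENNReal.ofReal (h y) ∂π.snd := by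
      rw [Measure.snd, lintegral_map hm.ennreal_ofReal measurable_snd]
    have e4 : ∫⁻ y, ENNReal.ofReal (h y) ∂π.snd = ∫⁻ y, ENNReal.ofReal (h y * g y) ∂ν := by
      rw [hsnd, lintegral_withDensity_eq_lintegral_mul ν hgm.ennreal_ofReal hm.ennreal_ofReal]
      congr 1
      funext y
      simp only [Pi.mul_apply]
      rw [← ofReal_mul (hg0 y), mul_comm]
    have := e1.trans (e3.trans (e4.trans e2.symm))
    exact (ENNReal.ofReal_eq_ofReal_iff (integral_nonneg fun (p : X × Y) => h0 p.2)
      (integral_nonneg fun y => mul_nonneg (h0 y) (hg0 y))).1 this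

  -- ## quantities
  set W : ℝ := ∫ x, f x ∂μ with hWdef
  set Wg : ℝ := ∫ y, g y ∂ν with hWgdef
  set epsf : ℝ := ∫ x, |f x - 1| ∂μ with hepsfdef
  set epsg : ℝ := ∫ y, |g y - 1| ∂ν with hepsgdef
  set mf : ℝ := ∫ x, m x ∂μ with hmfdef
  set mg : ℝ := ∫ y, n y ∂ν with hmgdef
  set L : ℝ := ∫ p, k p ∂π with hLdef
  set Uf : ℝ := ∫ p, m p.1 * k p ∂π with hUfdef
  set Ug : ℝ := ∫ p, n p.2 * k p ∂π with hUgdef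
  have habsfint : Integrable (fun x => |f x - 1|) μ := (hfint.sub (integrable_const 1)).abs
  have habsgint : Integrable (fun y => |g y - 1|) ν := (hgint.sub (integrable_const 1)).abs
  have hW0 : 0 ≤ W := integral_nonneg fun x => hf0 x
  have hWg0 : 0 ≤ Wg := integral_nonneg fun y => hg0 y
  have hπuniv1 : π Set.univ = ENNReal.ofReal W := by
    rw [← Measure.fst_univ, hfst, withDensity_apply _ MeasurableSet.univ, Measure.restrict_univ,
      ← ofReal_integral_eq_lintegral_ofReal hfint (ae_of_all _ hf0)]
  have hπuniv2 : π Set.univ = ENNReal.ofReal Wg := by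
    rw [← Measure.snd_univ, hsnd, withDensity_apply _ MeasurableSet.univ, Measure.restrict_univ,
      ← ofReal_integral_eq_lintegral_ofReal hgint (ae_of_all _ hg0)]
  have hWgW : Wg = W :=
    ((ENNReal.ofReal_eq_ofReal_iff hW0 hWg0).1 (hπuniv1.symm.trans hπuniv2)).symm
  have hIone : ∫ (_ : X × Y), (1:ℝ) ∂π = W := by
    rw [integral_const, measureReal_def, hπuniv1, smul_eq_mul, mul_one, ENNReal.toReal_ofReal hW0]
  -- identities for mf, mg
  have hmint : Integrable m μ := ibdμ m hmmeas fun x => abs_le.2 ⟨by linarith [hm0 x], hm1 x⟩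
  have hnint : Integrable n ν := ibdν n hnmeas fun y => abs_le.2 ⟨by linarith [hn0 y], hn1 y⟩
  have hmf_id : mf = (W + 1 - epsf) / 2 := by
    have hpt : (fun x => m x) = fun x => (f x + 1 - |f x - 1|) / 2 := by
      funext x
      rcases le_total (f x) 1 with h | h
      · simp only [hmdef]; rw [min_eq_left h, abs_of_nonpos (by linarith)]; ring
      · simp only [hmdef]; rw [min_eq_right h, abs_of_nonneg (by linarith)]; ring
    have hfp1 : Integrable (fun x => f x + 1) μ := hfint.add (integrable_const 1)
    rw [hmfdef, hpt, integral_div, integral_sub hfp1 habsfint,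
      integral_add hfint (integrable_const 1), integral_const]
    simp [hWdef, hepsfdef]
  have hmg_id : mg = (W + 1 - epsg) / 2 := by
    have hpt : (fun y => n y) = fun y => (g y + 1 - |g y - 1|) / 2 := by
      funext y
      rcases le_total (g y) 1 with h | h
      · simp only [hndef]; rw [min_eq_left h, abs_of_nonpos (by linarith)]; ring
      · simp only [hndef]; rw [min_eq_right h, abs_of_nonneg (by linarith)]; ring
    have hgp1 : Integrable (fun y => g y + 1) ν := hgint.add (integrable_const 1)
    rw [hmgdef, hpt, integral_div, integral_sub hgp1 habsgint,
      integral_add hgint (integrable_const 1), integral_const]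
    rw [← hWgdef, hWgW]
    simp [hepsgdef]
  -- integrability over π
  have hkint : Integrable k π := ibd k hkmeas fun p => abs_le.2 ⟨by linarith [hk0 p], hk1 p⟩
  have hmkint : Integrable (fun p => m p.1 * k p) π := by
    refine ibd _ ((hmmeas.comp measurable_fst).mul hkmeas) fun p => abs_le.2 ⟨?_, ?_⟩
    · nlinarith [hm0 p.1, hk0 p]
    · nlinarith [hm0 p.1, hm1 p.1, hk0 p, hk1 p]
  have hnkint : Integrable (fun p => n p.2 * k p) π := by
    refine ibd _ ((hnmeas.comp measurable_snd).mul hkmeas) fun p => abs_le.2 ⟨?_, ?_⟩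
    · nlinarith [hn0 p.2, hk0 p]
    · nlinarith [hn0 p.2, hn1 p.2, hk0 p, hk1 p]
  have hFinvπint : Integrable (fun p : X × Y => (F p.1)⁻¹) π :=
    ibd _ (hFinvmeas.comp measurable_fst) fun p =>
      abs_le.2 ⟨by linarith [hFinv_pos p.1], hFinv_le1 p.1⟩
  have hGinvπint : Integrable (fun p : X × Y => (G p.2)⁻¹) π :=
    ibd _ (hGinvmeas.comp measurable_snd) fun p =>
      abs_le.2 ⟨by linarith [hGinv_pos p.2], hGinv_le1 p.2⟩
  -- marginal integrals
  have hp1 : ∫ p, (F p.1)⁻¹ ∂π = mf := by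
    rw [fst_int (fun x => (F x)⁻¹) hFinvmeas (fun x => (hFinv_pos x).le) hFinv_le1, hmfdef]
    exact integral_congr_ae (ae_of_all _ fun x => hFm x)
  have hp2 : ∫ p, (G p.2)⁻¹ ∂π = mg := by
    rw [snd_int (fun y => (G y)⁻¹) hGinvmeas (fun y => (hGinv_pos y).le) hGinv_le1, hmgdef]
    exact integral_congr_ae (ae_of_all _ fun y => hGn y)
  -- lower bound for L
  have hLlb : mf + mg - W ≤ L := by
    have hpt : ∀ p : X × Y, (F p.1)⁻¹ + (G p.2)⁻¹ - 1 ≤ k p := by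
      intro p
      have h1 := hFinv_le1 p.1; have h2 := hGinv_le1 p.2
      have h3 := hFinv_pos p.1; have h4 := hGinv_pos p.2
      simp only [hkdef]
      nlinarith [mul_nonneg (sub_nonneg.2 h1) (sub_nonneg.2 h2)]
    have hint1 : Integrable (fun p : X × Y => (F p.1)⁻¹ + (G p.2)⁻¹ - 1) π :=
      (hFinvπint.add hGinvπint).sub (integrable_const 1)
    have hsum : Integrable (fun p : X × Y => (F p.1)⁻¹ + (G p.2)⁻¹) π :=
      hFinvπint.add hGinvπint
    have := integral_mono hint1 hkint hpt
    rw [integral_sub hsum (integrable_const 1),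
      integral_add hFinvπint hGinvπint, hp1, hp2, hIone] at this
    exact this
  have hLe : 1 - γ ≤ L := by
    have h1 : mf + mg - W = 1 - (epsf + epsg) / 2 := by
      rw [hmf_id, hmg_id]; ring
    have h2 : epsf ≤ γ := hfγ
    have h3 : epsg ≤ γ := hgγ
    nlinarith [hLlb]
  have hLpos : 0 < L := lt_of_lt_of_le (by linarith) hLe
  -- Uf, Ug bounds
  have hUfL : Uf ≤ L :=
    integral_mono hmkint hkint fun p => mul_le_of_le_one_left (hk0 p) (hm1 p.1)
  have hUgL : Ug ≤ L :=
    integral_mono hnkint hkint fun p => mul_le_of_le_one_left (hk0 p) (hn1 p.2)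
  have hone_m_int : Integrable (fun x => 1 - m x) μ := (integrable_const 1).sub hmint
  have hone_n_int : Integrable (fun y => 1 - n y) ν := (integrable_const 1).sub hnint
  have hone_m : ∫ x, (1 - m x) ∂μ = 1 - mf := by
    rw [integral_sub (integrable_const 1) hmint, integral_const]
    simp [hmfdef]
  have hone_n : ∫ y, (1 - n y) ∂ν = 1 - mg := by
    rw [integral_sub (integrable_const 1) hnint, integral_const]
    simp [hmgdef]
  have hLUf : L - Uf ≤ 1 - mf := by
    have e : L - Uf = ∫ p, (1 - m p.1) * k p ∂π := by
      rw [hLdef, hUfdef, ← integral_sub hkint hmkint]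
      exact integral_congr_ae (ae_of_all _ fun p => by ring)
    have hint2 : Integrable (fun p : X × Y => (1 - m p.1) * (F p.1)⁻¹) π := by
      refine ibd _ (((measurable_const.sub hmmeas).mul hFinvmeas).comp measurable_fst)
        fun p => abs_le.2 ⟨?_, ?_⟩
      · nlinarith [hm1 p.1, hFinv_pos p.1]
      · nlinarith [hm0 p.1, hm1 p.1, hFinv_pos p.1, hFinv_le1 p.1]
    have hint3 : Integrable (fun p => (1 - m p.1) * k p) π := by
      refine ibd _ (((measurable_const.sub hmmeas).comp measurable_fst).mul hkmeas)
        fun p => abs_le.2 ⟨?_, ?_⟩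
      · nlinarith [hm1 p.1, hk0 p]
      · nlinarith [hm0 p.1, hm1 p.1, hk0 p, hk1 p]
    have step : ∫ p, (1 - m p.1) * k p ∂π ≤ ∫ p, (1 - m p.1) * (F p.1)⁻¹ ∂π := by
      refine integral_mono hint3 hint2 fun p => ?_
      have hk_le : k p ≤ (F p.1)⁻¹ := by
        simp only [hkdef]
        exact mul_le_of_le_one_right (hFinv_pos p.1).le (hGinv_le1 p.2)
      exact mul_le_mul_of_nonneg_left hk_le (by linarith [hm1 p.1])
    have step2 : ∫ p, (1 - m p.1) * (F p.1)⁻¹ ∂π = ∫ x, (1 - m x) * m x ∂μ := by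
      have h := fst_int (fun x => (1 - m x) * (F x)⁻¹)
        ((measurable_const.sub hmmeas).mul hFinvmeas)
        (fun x => mul_nonneg (by linarith [hm1 x]) (hFinv_pos x).le)
        (fun x => by nlinarith [hm0 x, hm1 x, hFinv_pos x, hFinv_le1 x])
      beta_reduce at h
      rw [h]
      exact integral_congr_ae (ae_of_all _ fun x => by dsimp only; rw [mul_assoc, hFm x])
    have step3 : ∫ x, (1 - m x) * m x ∂μ ≤ ∫ x, (1 - m x) ∂μ := by
      refine integral_mono ?_ hone_m_int fun x => mul_le_of_le_one_right (by linarith [hm1 x]) (hm1 x)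
      refine ibdμ _ ((measurable_const.sub hmmeas).mul hmmeas) fun x => abs_le.2 ⟨?_, ?_⟩
      · nlinarith [hm0 x, hm1 x]
      · nlinarith [hm0 x, hm1 x]
    rw [hone_m] at step3
    linarith [e ▸ (step.trans (step2 ▸ step3))]
  have hLUg : L - Ug ≤ 1 - mg := by
    have e : L - Ug = ∫ p, (1 - n p.2) * k p ∂π := by
      rw [hLdef, hUgdef, ← integral_sub hkint hnkint]
      exact integral_congr_ae (ae_of_all _ fun p => by ring)
    have hint2 : Integrable (fun p : X × Y => (1 - n p.2) * (G p.2)⁻¹) π := by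
      refine ibd _ (((measurable_const.sub hnmeas).mul hGinvmeas).comp measurable_snd)
        fun p => abs_le.2 ⟨?_, ?_⟩
      · nlinarith [hn1 p.2, hGinv_pos p.2]
      · nlinarith [hn0 p.2, hn1 p.2, hGinv_pos p.2, hGinv_le1 p.2]
    have hint3 : Integrable (fun p => (1 - n p.2) * k p) π := by
      refine ibd _ (((measurable_const.sub hnmeas).comp measurable_snd).mul hkmeas)
        fun p => abs_le.2 ⟨?_, ?_⟩
      · nlinarith [hn1 p.2, hk0 p]
      · nlinarith [hn0 p.2, hn1 p.2, hk0 p, hk1 p]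
    have step : ∫ p, (1 - n p.2) * k p ∂π ≤ ∫ p, (1 - n p.2) * (G p.2)⁻¹ ∂π := by
      refine integral_mono hint3 hint2 fun p => ?_
      have hk_le : k p ≤ (G p.2)⁻¹ := by
        simp only [hkdef]
        rw [mul_comm]
        exact mul_le_of_le_one_right (hGinv_pos p.2).le (hFinv_le1 p.1)
      exact mul_le_mul_of_nonneg_left hk_le (by linarith [hn1 p.2])
    have step2 : ∫ p, (1 - n p.2) * (G p.2)⁻¹ ∂π = ∫ y, (1 - n y) * n y ∂ν := by
      have h := snd_int (fun y => (1 - n y) * (G y)⁻¹)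
        ((measurable_const.sub hnmeas).mul hGinvmeas)
        (fun y => mul_nonneg (by linarith [hn1 y]) (hGinv_pos y).le)
        (fun y => by nlinarith [hn0 y, hn1 y, hGinv_pos y, hGinv_le1 y])
      beta_reduce at h
      rw [h]
      exact integral_congr_ae (ae_of_all _ fun y => by dsimp only; rw [mul_assoc, hGn y])
    have step3 : ∫ y, (1 - n y) * n y ∂ν ≤ ∫ y, (1 - n y) ∂ν := by
      refine integral_mono ?_ hone_n_int fun y => mul_le_of_le_one_right (by linarith [hn1 y]) (hn1 y)
      refine ibdν _ ((measurable_const.sub hnmeas).mul hnmeas) fun y => abs_le.2 ⟨?_, ?_⟩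
      · nlinarith [hn0 y, hn1 y]
      · nlinarith [hn0 y, hn1 y]
    rw [hone_n] at step3
    linarith [e ▸ (step.trans (step2 ▸ step3))]
  -- A, B bounds
  have hAγ : 1 - mf ≤ γ := by
    have hpt : ∀ x, 1 - m x ≤ |f x - 1| := by
      intro x
      rcases le_total (f x) 1 with h | h
      · simp only [hmdef]; rw [min_eq_left h, abs_of_nonpos (by linarith)]; ring_nf; linarith
      · simp only [hmdef]; rw [min_eq_right h]; simp [abs_nonneg]
    have := integral_mono hone_m_int habsfint hpt
    rw [hone_m] at this
    exact this.trans hfγ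
  have hBγ : 1 - mg ≤ γ := by
    have hpt : ∀ y, 1 - n y ≤ |g y - 1| := by
      intro y
      rcases le_total (g y) 1 with h | h
      · simp only [hndef]; rw [min_eq_left h, abs_of_nonpos (by linarith)]; ring_nf; linarith
      · simp only [hndef]; rw [min_eq_right h]; simp [abs_nonneg]
    have := integral_mono hone_n_int habsgint hpt
    rw [hone_n] at this
    exact this.trans hgγ
  have hA0 : 0 ≤ 1 - mf := by
    have : mf ≤ 1 := by
      have := integral_mono hmint (integrable_const 1) hm1
      simpa using this
    linarith
  have hB0 : 0 ≤ 1 - mg := by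
    have : mg ≤ 1 := by
      have := integral_mono hnint (integrable_const 1) hn1
      simpa using this
    linarith

  -- ## AM-GM / Jensen step
  set mass : ℝ := ∫ p, w p ∂π with hmassdef
  have hw1 : ∀ p, w p ≤ 1 := by
    intro p
    rw [hwdef]
    have h1 := abs_nonneg (f p.1 - 1); have h2 := abs_nonneg (g p.2 - 1)
    rw [div_le_one (by nlinarith)]
    nlinarith
  have hwint : Integrable w π := ibd w hwmeas fun p => abs_le.2 ⟨by linarith [hw0 p], hw1 p⟩
  set D1 : ℝ := 2 * L - Uf with hD1def
  set D2 : ℝ := 2 * L - Ug with hD2def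
  have hD1L : L ≤ D1 := by rw [hD1def]; linarith
  have hD2L : L ≤ D2 := by rw [hD2def]; linarith
  have hD1pos : 0 < D1 := lt_of_lt_of_le hLpos hD1L
  have hD2pos : 0 < D2 := lt_of_lt_of_le hLpos hD2L
  set σ : ℝ := D1 / L with hσdef
  set τ : ℝ := D2 / L with hτdef
  have hσpos : 0 < σ := div_pos hD1pos hLpos
  have hτpos : 0 < τ := div_pos hD2pos hLpos
  have hs1int : Integrable (fun p => 2 * k p - m p.1 * k p) π := (hkint.const_mul 2).sub hmkint
  have hs2int : Integrable (fun p => 2 * k p - n p.2 * k p) π := (hkint.const_mul 2).sub hnkint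
  have hs1 : ∫ p, (2 * k p - m p.1 * k p) ∂π = D1 := by
    rw [integral_sub (hkint.const_mul 2) hmkint, integral_const_mul, hD1def, ← hLdef, ← hUfdef]
  have hs2 : ∫ p, (2 * k p - n p.2 * k p) ∂π = D2 := by
    rw [integral_sub (hkint.const_mul 2) hnkint, integral_const_mul, hD2def, ← hLdef, ← hUgdef]
  have hpt : ∀ p : X × Y,
      (3 * k p - (2 * k p - m p.1 * k p)/σ - (2 * k p - n p.2 * k p)/τ)/(σ*τ) ≤ w p := by
    intro p
    have hs : 0 < 2 - m p.1 := by linarith [hm1 p.1]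
    have ht : 0 < 2 - n p.2 := by linarith [hn1 p.2]
    have htan := tangent3 (2 - m p.1) (2 - n p.2) σ τ hs ht hσpos hτpos
    have hmul := mul_le_mul_of_nonneg_left htan (hk0 p)
    rw [hw_eq p]
    calc (3 * k p - (2 * k p - m p.1 * k p)/σ - (2 * k p - n p.2 * k p)/τ)/(σ*τ)
        = k p * ((3 - (2 - m p.1)/σ - (2 - n p.2)/τ)/(σ*τ)) := by
          field_simp
      _ ≤ k p * (1/((2 - m p.1)*(2 - n p.2))) := hmul
  have hbigint : Integrable
      (fun p => (3 * k p - (2 * k p - m p.1 * k p)/σ - (2 * k p - n p.2 * k p)/τ)) π :=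
    ((hkint.const_mul 3).sub (hs1int.div_const σ)).sub (hs2int.div_const τ)
  have hbigval : ∫ p, ((3 * k p - (2 * k p - m p.1 * k p)/σ - (2 * k p - n p.2 * k p)/τ)/(σ*τ)) ∂π
      = (3*L - D1/σ - D2/τ)/(σ*τ) := by
    have hi3 : Integrable (fun p => 3 * k p) π := hkint.const_mul 3
    have hi1d : Integrable (fun p => (2 * k p - m p.1 * k p)/σ) π := hs1int.div_const σ
    have hi2d : Integrable (fun p => (2 * k p - n p.2 * k p)/τ) π := hs2int.div_const τ
    have hi1 : Integrable (fun p => 3 * k p - (2 * k p - m p.1 * k p)/σ) π := hi3.sub hi1d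
    rw [integral_div, integral_sub hi1 hi2d, integral_sub hi3 hi1d, integral_const_mul,
      integral_div, integral_div, hs1, hs2, ← hLdef]
  have hmassLB : (3*L - D1/σ - D2/τ)/(σ*τ) ≤ mass := by
    rw [← hbigval, hmassdef]
    exact integral_mono (hbigint.div_const (σ*τ)) hwint hpt
  have hsimp : (3*L - D1/σ - D2/τ)/(σ*τ) = L^3/(D1*D2) := by
    rw [hσdef, hτdef]
    have hL0 : L ≠ 0 := ne_of_gt hLpos
    have h10 : D1 ≠ 0 := ne_of_gt hD1pos
    have h20 : D2 ≠ 0 := ne_of_gt hD2pos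
    field_simp
    ring
  -- ## final algebra
  have hepos : (0:ℝ) < 1 - γ := by linarith
  have heL : 1 - γ ≤ L := hLe
  have hD1A : D1 ≤ L + (1 - mf) := by rw [hD1def]; linarith [hLUf]
  have hD2B : D2 ≤ L + (1 - mg) := by rw [hD2def]; linarith [hLUg]
  have c1 : (1 - γ) * D1 ≤ L :=
    alg1 (1-γ) (1-mf) L D1 hepos hA0 (by linarith [hAγ]) heL hLpos hD1A
  have c2 : (1 - γ) * D2 ≤ L :=
    alg1 (1-γ) (1-mg) L D2 hepos hB0 (by linarith [hBγ]) heL hLpos hD2B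
  have h1a : ((1-γ)*D1)*((1-γ)*D2) ≤ L*L :=
    mul_le_mul c1 c2 (by positivity) hLpos.le
  have h1 : (1-γ)^3*(D1*D2) ≤ L^3 := by
    have q1 : (1-γ)*(((1-γ)*D1)*((1-γ)*D2)) ≤ (1-γ)*(L*L) :=
      mul_le_mul_of_nonneg_left h1a hepos.le
    have q2 : (1-γ)*(L*L) ≤ L*(L*L) :=
      mul_le_mul_of_nonneg_right heL (mul_nonneg hLpos.le hLpos.le)
    calc (1-γ)^3*(D1*D2) = (1-γ)*(((1-γ)*D1)*((1-γ)*D2)) := by ring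
      _ ≤ (1-γ)*(L*L) := q1
      _ ≤ L*(L*L) := q2
      _ = L^3 := by ring
  have h2 : L^3 ≤ mass * (D1*D2) := by
    have := hsimp ▸ hmassLB
    rwa [div_le_iff₀ (mul_pos hD1pos hD2pos)] at this
  have hfinal : (1-γ)^3 ≤ mass :=
    le_of_mul_le_mul_right (by linarith) (mul_pos hD1pos hD2pos)
  -- ## conclusion
  have hgoal : (π.withDensity (fun p => ENNReal.ofReal (w p))) Set.univ = ENNReal.ofReal mass := by
    rw [withDensity_apply _ MeasurableSet.univ, Measure.restrict_univ, hmassdef,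
      ofReal_integral_eq_lintegral_ofReal hwint (ae_of_all _ hw0)]
  rw [hgoal]
  exact ofReal_le_ofReal hfinal


theorem parts123 {X Y : Type*} [MeasurableSpace X] [MeasurableSpace Y]
    (μ : Measure X) (ν : Measure Y) [IsProbabilityMeasure μ] [IsProbabilityMeasure ν]
    (f : X → ℝ) (g : Y → ℝ) (hfm : Measurable f) (hgm : Measurable g)
    (hf0 : ∀ x, 0 ≤ f x) (hg0 : ∀ y, 0 ≤ g y)
    (π : Measure (X × Y)) [IsFiniteMeasure π]
    (hfst : π.fst = μ.withDensity (fun x => ENNReal.ofReal (f x)))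
    (hsnd : π.snd = ν.withDensity (fun y => ENNReal.ofReal (g y))) :
    π.withDensity (fun p => ENNReal.ofReal (1 / ((1 + |f p.1 - 1|) * (1 + |g p.2 - 1|)))) ≤ π ∧
    (π.withDensity (fun p => ENNReal.ofReal (1 / ((1 + |f p.1 - 1|) * (1 + |g p.2 - 1|))))).fst ≤ μ ∧
    (π.withDensity (fun p => ENNReal.ofReal (1 / ((1 + |f p.1 - 1|) * (1 + |g p.2 - 1|))))).snd ≤ ν := by
  have haf : ∀ x, (0:ℝ) < 1 + |f x - 1| := fun x => by positivity
  have hag : ∀ y, (0:ℝ) < 1 + |g y - 1| := fun y => by positivity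
  have h1af : ∀ x, (1:ℝ) ≤ 1 + |f x - 1| := fun x => by
    have := abs_nonneg (f x - 1); linarith
  have h1ag : ∀ y, (1:ℝ) ≤ 1 + |g y - 1| := fun y => by
    have := abs_nonneg (g y - 1); linarith
  refine ⟨?_, ?_, ?_⟩
  · refine Measure.le_iff.2 fun s hs => ?_
    rw [withDensity_apply _ hs]
    calc ∫⁻ p in s, ENNReal.ofReal (1 / ((1 + |f p.1 - 1|) * (1 + |g p.2 - 1|))) ∂π
        ≤ ∫⁻ _ in s, 1 ∂π := by
          refine lintegral_mono fun p => ?_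
          refine ofReal_le_one.2 ?_
          rw [div_le_one (by positivity)]
          nlinarith [h1af p.1, h1ag p.2]
      _ = π s := setLIntegral_one s
  · refine Measure.le_iff.2 fun s hs => ?_
    rw [Measure.fst_apply hs, withDensity_apply _ (measurable_fst hs)]
    have step1 : ∫⁻ p in Prod.fst ⁻¹' s, ENNReal.ofReal (1 / ((1 + |f p.1 - 1|) * (1 + |g p.2 - 1|))) ∂π
        ≤ ∫⁻ p in Prod.fst ⁻¹' s, (fun x => ENNReal.ofReal (1 / (1 + |f x - 1|))) p.1 ∂π := by
      refine lintegral_mono fun p => ofReal_le_ofReal ?_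
      refine div_le_div_of_nonneg_left zero_le_one (haf p.1) ?_
      nlinarith [h1af p.1, h1ag p.2, haf p.1]
    refine step1.trans ?_
    have hh : Measurable fun x => ENNReal.ofReal (1 / (1 + |f x - 1|)) := by
      apply Measurable.ennreal_ofReal
      exact (measurable_const.div (((hfm.sub measurable_const).abs).const_add 1))
    have step2 : ∫⁻ p in Prod.fst ⁻¹' s, (fun x => ENNReal.ofReal (1 / (1 + |f x - 1|))) p.1 ∂π
        = ∫⁻ x in s, ENNReal.ofReal (1 / (1 + |f x - 1|)) ∂π.fst := by
      rw [Measure.fst, setLIntegral_map hs hh measurable_fst]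
    rw [step2, hfst, setLIntegral_withDensity_eq_setLIntegral_mul μ hfm.ennreal_ofReal hh hs]
    calc ∫⁻ x in s, (ENNReal.ofReal (f x) * ENNReal.ofReal (1 / (1 + |f x - 1|))) ∂μ
        ≤ ∫⁻ _ in s, 1 ∂μ := by
          refine lintegral_mono fun x => ?_
          rw [← ofReal_mul (hf0 x)]
          refine ofReal_le_one.2 ?_
          rw [mul_one_div, div_le_one (haf x)]
          cases' abs_cases (f x - 1) with h h <;> nlinarith [h.1]
      _ = μ s := setLIntegral_one s
  · refine Measure.le_iff.2 fun s hs => ?_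
    rw [Measure.snd_apply hs, withDensity_apply _ (measurable_snd hs)]
    have step1 : ∫⁻ p in Prod.snd ⁻¹' s, ENNReal.ofReal (1 / ((1 + |f p.1 - 1|) * (1 + |g p.2 - 1|))) ∂π
        ≤ ∫⁻ p in Prod.snd ⁻¹' s, (fun y => ENNReal.ofReal (1 / (1 + |g y - 1|))) p.2 ∂π := by
      refine lintegral_mono fun p => ofReal_le_ofReal ?_
      refine div_le_div_of_nonneg_left zero_le_one (hag p.2) ?_
      nlinarith [h1af p.1, h1ag p.2, hag p.2]
    refine step1.trans ?_
    have hh : Measurable fun y => ENNReal.ofReal (1 / (1 + |g y - 1|)) := by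
      apply Measurable.ennreal_ofReal
      exact (measurable_const.div (((hgm.sub measurable_const).abs).const_add 1))
    have step2 : ∫⁻ p in Prod.snd ⁻¹' s, (fun y => ENNReal.ofReal (1 / (1 + |g y - 1|))) p.2 ∂π
        = ∫⁻ y in s, ENNReal.ofReal (1 / (1 + |g y - 1|)) ∂π.snd := by
      rw [Measure.snd, setLIntegral_map hs hh measurable_snd]
    rw [step2, hsnd, setLIntegral_withDensity_eq_setLIntegral_mul ν hgm.ennreal_ofReal hh hs]
    calc ∫⁻ y in s, (ENNReal.ofReal (g y) * ENNReal.ofReal (1 / (1 + |g y - 1|))) ∂ν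
        ≤ ∫⁻ _ in s, 1 ∂ν := by
          refine lintegral_mono fun y => ?_
          rw [← ofReal_mul (hg0 y)]
          refine ofReal_le_one.2 ?_
          rw [mul_one_div, div_le_one (hag y)]
          cases' abs_cases (g y - 1) with h h <;> nlinarith [h.1]
      _ = ν s := setLIntegral_one s

theorem stmt4
    {X Y : Type*} [MeasurableSpace X] [TopologicalSpace X] [PolishSpace X] [BorelSpace X]
    [MeasurableSpace Y] [TopologicalSpace Y] [PolishSpace Y] [BorelSpace Y]
    (μ : Measure X) (ν : Measure Y) [IsProbabilityMeasure μ] [IsProbabilityMeasure ν]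
    (f : X → ℝ) (g : Y → ℝ) (hf0 : ∀ x, 0 ≤ f x) (hg0 : ∀ y, 0 ≤ g y)
    (hfint : Integrable f μ) (hgint : Integrable g ν)
    (π : Measure (X × Y)) [IsFiniteMeasure π]
    (hfst : π.fst = μ.withDensity (fun x => ENNReal.ofReal (f x)))
    (hsnd : π.snd = ν.withDensity (fun y => ENNReal.ofReal (g y)))
    (γ : ℝ) (hγ : γ ∈ Set.Ioo (0 : ℝ) 1)
    (hfγ : ∫ x, |f x - 1| ∂μ < γ) (hgγ : ∫ y, |g y - 1| ∂ν < γ) :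
    π.withDensity (fun p => ENNReal.ofReal (1 / ((1 + |f p.1 - 1|) * (1 + |g p.2 - 1|)))) ≤ π ∧
    (π.withDensity (fun p => ENNReal.ofReal (1 / ((1 + |f p.1 - 1|) * (1 + |g p.2 - 1|))))).fst ≤ μ ∧
    (π.withDensity (fun p => ENNReal.ofReal (1 / ((1 + |f p.1 - 1|) * (1 + |g p.2 - 1|))))).snd ≤ ν ∧
    ENNReal.ofReal ((1 - γ) / (1 + γ / (1 - γ)) ^ 2) ≤
      (π.withDensity (fun p => ENNReal.ofReal (1 / ((1 + |f p.1 - 1|) * (1 + |g p.2 - 1|))))) Set.univ ∧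
    ENNReal.ofReal ((1 - γ) ^ 3) ≤ ENNReal.ofReal ((1 - γ) / (1 + γ / (1 - γ)) ^ 2) := by
  obtain ⟨hγ0, hγ1⟩ := hγ
  -- measurable nonneg versions
  obtain ⟨f₁, hf₁m, hff₁⟩ : ∃ f₁, Measurable f₁ ∧ f =ᵐ[μ] f₁ :=
    ⟨hfint.1.mk f, hfint.1.stronglyMeasurable_mk.measurable, hfint.1.ae_eq_mk⟩
  obtain ⟨g₁, hg₁m, hgg₁⟩ : ∃ g₁, Measurable g₁ ∧ g =ᵐ[ν] g₁ :=
    ⟨hgint.1.mk g, hgint.1.stronglyMeasurable_mk.measurable, hgint.1.ae_eq_mk⟩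
  set f₀ : X → ℝ := fun x => max (f₁ x) 0 with hf₀def
  set g₀ : Y → ℝ := fun y => max (g₁ y) 0 with hg₀def
  have hf₀m : Measurable f₀ := hf₁m.max measurable_const
  have hg₀m : Measurable g₀ := hg₁m.max measurable_const
  have hff₀ : f =ᵐ[μ] f₀ := hff₁.mono fun x hx => by
    simp only [hf₀def, ← hx, max_eq_left (hf0 x)]
  have hgg₀ : g =ᵐ[ν] g₀ := hgg₁.mono fun y hy => by
    simp only [hg₀def, ← hy, max_eq_left (hg0 y)]
  have hf₀0 : ∀ x, 0 ≤ f₀ x := fun x => le_max_right _ _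
  have hg₀0 : ∀ y, 0 ≤ g₀ y := fun y => le_max_right _ _
  have hf₀int : Integrable f₀ μ := hfint.congr hff₀
  have hg₀int : Integrable g₀ ν := hgint.congr hgg₀
  have hfst₀ : π.fst = μ.withDensity (fun x => ENNReal.ofReal (f₀ x)) := by
    rw [hfst]; exact withDensity_congr_ae (hff₀.mono fun x hx => by dsimp only; rw [hx])
  have hsnd₀ : π.snd = ν.withDensity (fun y => ENNReal.ofReal (g₀ y)) := by
    rw [hsnd]; exact withDensity_congr_ae (hgg₀.mono fun y hy => by dsimp only; rw [hy])
  -- a.e. equality over π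
  have haef : ∀ᵐ p ∂π, f p.1 = f₀ p.1 := by
    obtain ⟨N, hsub, hNm, hN0⟩ := exists_measurable_superset_of_null (ae_iff.1 hff₀)
    have hπN : π (Prod.fst ⁻¹' N) = 0 := by
      have h1 : π.fst N = 0 := by
        rw [hfst₀, withDensity_apply _ hNm, setLIntegral_measure_zero _ _ hN0]
      rwa [Measure.fst_apply hNm] at h1
    refine ae_iff.2 (measure_mono_null ?_ hπN)
    intro p hp; exact hsub hp
  have haeg : ∀ᵐ p ∂π, g p.2 = g₀ p.2 := by
    obtain ⟨N, hsub, hNm, hN0⟩ := exists_measurable_superset_of_null (ae_iff.1 hgg₀)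
    have hπN : π (Prod.snd ⁻¹' N) = 0 := by
      have h1 : π.snd N = 0 := by
        rw [hsnd₀, withDensity_apply _ hNm, setLIntegral_measure_zero _ _ hN0]
      rwa [Measure.snd_apply hNm] at h1
    refine ae_iff.2 (measure_mono_null ?_ hπN)
    intro p hp; exact hsub hp
  have hwae : (fun p : X × Y => ENNReal.ofReal (1 / ((1 + |f p.1 - 1|) * (1 + |g p.2 - 1|))))
      =ᵐ[π] (fun p : X × Y => ENNReal.ofReal (1 / ((1 + |f₀ p.1 - 1|) * (1 + |g₀ p.2 - 1|)))) := by
    filter_upwards [haef, haeg] with p h1 h2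
    rw [h1, h2]
  have hpid : π.withDensity (fun p => ENNReal.ofReal (1 / ((1 + |f p.1 - 1|) * (1 + |g p.2 - 1|))))
      = π.withDensity (fun p => ENNReal.ofReal (1 / ((1 + |f₀ p.1 - 1|) * (1 + |g₀ p.2 - 1|)))) :=
    withDensity_congr_ae hwae
  have hεf : ∫ x, |f₀ x - 1| ∂μ ≤ γ := by
    rw [integral_congr_ae (hff₀.mono fun x hx => by rw [hx])] at hfγ; exact hfγ.le
  have hεg : ∫ y, |g₀ y - 1| ∂ν ≤ γ := by
    rw [integral_congr_ae (hgg₀.mono fun y hy => by rw [hy])] at hgγ; exact hgγ.le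
  have hmass := main_meas μ ν f₀ g₀ hf₀m hg₀m hf₀0 hg₀0 hf₀int hg₀int π hfst₀ hsnd₀ γ hγ0 hγ1 hεf hεg
  have h123 := parts123 μ ν f₀ g₀ hf₀m hg₀m hf₀0 hg₀0 π hfst₀ hsnd₀
  have hval : (1 - γ) / (1 + γ / (1 - γ)) ^ 2 = (1 - γ)^3 := by
    have h1γ : (1:ℝ) - γ ≠ 0 := by linarith
    have : 1 + γ / (1 - γ) = 1/(1-γ) := by field_simp; ring
    rw [this]; field_simp
  rw [hpid, hval]
  exact ⟨h123.1, h123.2.1, h123.2.2, hmass, le_refl _⟩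
end

section
/- Duality gap example: let X = Y = [0,1], μ = ν = Lebesgue measure, and define c(x,y) = 0 if y < x, c(x,y) = 1 if x = y, and c(x,y) = ∞ if x < y. Then the primal value P = inf{∫ c dπ : π ∈ Π(μ,ν)} equals 1, while the dual value D = sup{∫φ dμ + ∫ψ dν : (φ,ψ) integrable with φ(x)+ψ(y) ≤ c(x,y) for all (x,y)} equals 0. -/
open MeasureTheory ENNReal

/-- Lebesgue measure on `[0,1]`. -/
noncomputable def lam : Measure ℝ := volume.restrict (Set.Icc 0 1)

/-- The cost function of the duality gap example: `0` below the diagonal,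
`1` on the diagonal, `∞` above the diagonal. -/
noncomputable def cGap : ℝ × ℝ → ℝ≥0∞ :=
  fun p => if p.2 < p.1 then 0 else if p.1 = p.2 then 1 else ⊤


lemma lam_univ : lam Set.univ = 1 := by simp [lam, Real.volume_Icc]

instance : IsProbabilityMeasure lam := ⟨lam_univ⟩

lemma measurable_cGap : Measurable cGap := by
  apply Measurable.ite (measurableSet_lt measurable_snd measurable_fst) measurable_const
  exact Measurable.ite (measurableSet_eq_fun measurable_fst measurable_snd)
    measurable_const measurable_const

lemma diag_lintegral : ∫⁻ p, cGap p ∂(lam.map (fun x => (x, x))) = 1 := by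
  have hm : Measurable (fun x : ℝ => (x, x)) := measurable_id.prodMk measurable_id
  rw [lintegral_map measurable_cGap hm]
  simp [cGap, lam_univ]

lemma diag_fst : (lam.map (fun x => (x, x))).fst = lam := by
  have hm : Measurable (fun x : ℝ => (x, x)) := measurable_id.prodMk measurable_id
  rw [Measure.fst, Measure.map_map measurable_fst hm]
  have : (Prod.fst ∘ fun x : ℝ => (x, x)) = id := rfl
  rw [this, Measure.map_id]

lemma diag_snd : (lam.map (fun x => (x, x))).snd = lam := by
  have hm : Measurable (fun x : ℝ => (x, x)) := measurable_id.prodMk measurable_id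
  rw [Measure.snd, Measure.map_map measurable_snd hm]
  have : (Prod.snd ∘ fun x : ℝ => (x, x)) = id := rfl
  rw [this, Measure.map_id]

lemma part1_lower (π : Measure (ℝ × ℝ)) (hp : IsProbabilityMeasure π)
    (h1 : π.fst = lam) (h2 : π.snd = lam) : 1 ≤ ∫⁻ p, cGap p ∂π := by
  set A : Set (ℝ × ℝ) := {p | p.1 < p.2} with hAdef
  have hAm : MeasurableSet A := measurableSet_lt measurable_fst measurable_snd
  by_cases hA0 : π A = 0
  · -- π concentrated on diagonal
    have hBt : ∀ t : ℚ, π {p : ℝ × ℝ | p.2 ≤ (t : ℝ) ∧ (t : ℝ) < p.1} = 0 := by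
      intro t
      set X : Set (ℝ × ℝ) := {p | p.1 ≤ (t : ℝ)} with hXdef
      set Y : Set (ℝ × ℝ) := {p | p.2 ≤ (t : ℝ)} with hYdef
      have hXm : MeasurableSet X := measurableSet_le measurable_fst measurable_const
      have hYm : MeasurableSet Y := measurableSet_le measurable_snd measurable_const
      have hX : π X = lam (Set.Iic (t : ℝ)) := by
        rw [← h1, Measure.fst_apply measurableSet_Iic]; rfl
      have hY : π Y = lam (Set.Iic (t : ℝ)) := by
        rw [← h2, Measure.snd_apply measurableSet_Iic]; rfl
      have hXdiff : π (X \ Y) = 0 := by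
        refine measure_mono_null ?_ hA0
        rintro ⟨x, y⟩ ⟨hx, hy⟩
        have hx' : x ≤ (t : ℝ) := hx
        have hy' : ¬ y ≤ (t : ℝ) := hy
        show x < y
        exact lt_of_le_of_lt hx' (not_le.1 hy')
      have hXY : π (X ∩ Y) = lam (Set.Iic (t : ℝ)) := by
        rw [← hX, ← measure_inter_add_diff X hYm, hXdiff, add_zero]
      have hfin : lam (Set.Iic (t : ℝ)) ≠ ⊤ := measure_ne_top lam (Set.Iic (t : ℝ))
      have hYX : π (Y \ X) = 0 := by
        have h := measure_inter_add_diff Y hXm (μ := π)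
        rw [Set.inter_comm, hXY, hY] at h
        have h' : lam (Set.Iic (t : ℝ)) + π (Y \ X) = lam (Set.Iic (t : ℝ)) + 0 := by
          rw [add_zero]; exact h
        exact (ENNReal.add_right_inj hfin).1 h'
      refine measure_mono_null ?_ hYX
      rintro ⟨x, y⟩ ⟨hy, hx⟩
      have hy' : y ≤ (t : ℝ) := hy
      have hx' : (t : ℝ) < x := hx
      exact ⟨hy', not_le.2 hx'⟩
    have hB0 : π {p : ℝ × ℝ | p.2 < p.1} = 0 := by
      refine measure_mono_null ?_
        (measure_iUnion_null (fun t : ℚ => hBt t))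
      rintro ⟨x, y⟩ (h : y < x)
      obtain ⟨q, hq1, hq2⟩ := exists_rat_btwn h
      exact Set.mem_iUnion.2 ⟨q, hq1.le, hq2⟩
    have hae : ∀ᵐ p ∂π, cGap p = 1 := by
      have hnull : π (A ∪ {p : ℝ × ℝ | p.2 < p.1}) = 0 := measure_union_null hA0 hB0
      rw [ae_iff]
      refine measure_mono_null ?_ hnull
      rintro ⟨x, y⟩ hxy
      simp only [Set.mem_setOf_eq] at hxy
      by_contra hud
      apply hxy
      simp only [Set.mem_union, Set.mem_setOf_eq, hAdef] at hud
      push_neg at hud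
      have hxy' : x = y := le_antisymm hud.2 hud.1
      subst hxy'
      simp [cGap]
    rw [lintegral_congr_ae hae, lintegral_one, measure_univ]
  · have htop : ∫⁻ p in A, cGap p ∂π = ⊤ := by
      have : ∀ p ∈ A, cGap p = ⊤ := by
        rintro ⟨x, y⟩ (hxy : x < y)
        simp [cGap, hxy.asymm, hxy.ne]
      rw [setLIntegral_congr_fun hAm this, setLIntegral_const]
      exact ENNReal.top_mul hA0
    calc (1 : ℝ≥0∞) ≤ ⊤ := le_top
    _ = ∫⁻ p in A, cGap p ∂π := htop.symm
    _ ≤ ∫⁻ p, cGap p ∂π := setLIntegral_le_lintegral _ _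

lemma dual_bound_h (φ ψ : ℝ → ℝ) (hφ : IntegrableOn φ (Set.Icc 0 1) volume)
    (hψ : IntegrableOn ψ (Set.Icc 0 1) volume)
    (hc : ∀ x ∈ Set.Icc (0:ℝ) 1, ∀ y ∈ Set.Icc (0:ℝ) 1,
      ENNReal.ofReal (φ x + ψ y) ≤ cGap (x, y))
    (h : ℝ) (h0 : 0 < h) (h1 : h ≤ 1) :
    (∫ x in Set.Icc h 1, φ x) + ∫ y in Set.Icc 0 (1 - h), ψ y ≤ 0 := by
  set F : ℝ → ℝ := (Set.Icc 0 (1 - h)).indicator ψ with hF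
  have hsub : Set.Icc (0:ℝ) (1-h) ⊆ Set.Icc 0 1 := Set.Icc_subset_Icc le_rfl (by linarith)
  have hFint : Integrable F volume :=
    (integrable_indicator_iff measurableSet_Icc).2 (hψ.mono_set hsub)
  have hFshift : Integrable (fun x => F (x - h)) volume := hFint.comp_sub_right h
  have hpt : ∀ x ∈ Set.Icc h 1, φ x ≤ -F (x - h) := by
    intro x hx
    rw [Set.mem_Icc] at hx
    have hx1 : x ∈ Set.Icc (0:ℝ) 1 := Set.mem_Icc.2 ⟨le_trans h0.le hx.1, hx.2⟩
    have hy1 : x - h ∈ Set.Icc (0:ℝ) (1-h) :=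
      Set.mem_Icc.2 ⟨by linarith [hx.1], by linarith [hx.2]⟩
    have hy2 : x - h ∈ Set.Icc (0:ℝ) 1 := hsub hy1
    have hcc := hc x hx1 (x - h) hy2
    have hlt : x - h < x := by linarith
    have hcg : cGap (x, x - h) = 0 := by simp [cGap, hlt]
    rw [hcg, le_zero_iff, ENNReal.ofReal_eq_zero] at hcc
    rw [hF, Set.indicator_of_mem hy1]
    linarith
  have hmono : ∫ x in Set.Icc h 1, φ x ≤ ∫ x in Set.Icc h 1, -F (x - h) :=
    setIntegral_mono_on (hφ.mono_set (Set.Icc_subset_Icc h0.le le_rfl))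
      hFshift.neg.integrableOn measurableSet_Icc hpt
  have hz : ∀ x ∉ Set.Icc h 1, F (x - h) = 0 := by
    intro x hx
    refine Set.indicator_of_notMem (fun hmem => hx ?_) ψ
    rw [Set.mem_Icc] at hmem ⊢
    constructor <;> linarith [hmem.1, hmem.2]
  have heq : ∫ x in Set.Icc h 1, F (x - h) = ∫ y in Set.Icc 0 (1 - h), ψ y := by
    rw [setIntegral_eq_integral_of_forall_compl_eq_zero hz,
      integral_sub_right_eq_self F h, hF, integral_indicator measurableSet_Icc]
  rw [integral_neg, heq] at hmono
  linarith

lemma dual_bound (φ ψ : ℝ → ℝ) (hφ : Integrable φ lam) (hψ : Integrable ψ lam)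
    (hc : ∀ x ∈ Set.Icc (0:ℝ) 1, ∀ y ∈ Set.Icc (0:ℝ) 1,
      ENNReal.ofReal (φ x + ψ y) ≤ cGap (x, y)) :
    (∫ x, φ x ∂lam) + ∫ y, ψ y ∂lam ≤ 0 := by
  have hφ' : IntegrableOn φ (Set.Icc 0 1) volume := hφ
  have hψ' : IntegrableOn ψ (Set.Icc 0 1) volume := hψ
  set s : ℕ → Set ℝ := fun n => Set.Icc (1 / (n + 1) : ℝ) 1 with hs
  set t : ℕ → Set ℝ := fun n => Set.Icc (0:ℝ) (1 - 1 / (n + 1)) with ht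
  have hsm : Monotone s := by
    intro m n hmn
    apply Set.Icc_subset_Icc _ le_rfl
    gcongr
  have htm : Monotone t := by
    intro m n hmn
    apply Set.Icc_subset_Icc le_rfl
    have h2 : 1 / ((n:ℝ)+1) ≤ 1/((m:ℝ)+1) := by gcongr
    linarith
  have hsU : (⋃ n, s n) = Set.Ioc (0:ℝ) 1 := by
    ext x
    simp only [hs, Set.mem_iUnion, Set.mem_Icc, Set.mem_Ioc]
    constructor
    · rintro ⟨n, hh1, hh2⟩
      exact ⟨lt_of_lt_of_le (by positivity) hh1, hh2⟩
    · rintro ⟨hh1, hh2⟩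
      obtain ⟨n, hn⟩ := exists_nat_one_div_lt hh1
      exact ⟨n, hn.le, hh2⟩
  have htU : (⋃ n, t n) = Set.Ico (0:ℝ) 1 := by
    ext x
    simp only [ht, Set.mem_iUnion, Set.mem_Icc, Set.mem_Ico]
    constructor
    · rintro ⟨n, hh1, hh2⟩
      refine ⟨hh1, lt_of_le_of_lt hh2 ?_⟩
      have : (0:ℝ) < 1 / (n+1) := by positivity
      linarith
    · rintro ⟨hh1, hh2⟩
      obtain ⟨n, hn⟩ := exists_nat_one_div_lt (by linarith : (0:ℝ) < 1 - x)
      exact ⟨n, hh1, by linarith⟩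
  have hφlim : Filter.Tendsto (fun n => ∫ x in s n, φ x) Filter.atTop
      (nhds (∫ x in Set.Ioc (0:ℝ) 1, φ x)) := by
    have := tendsto_setIntegral_of_monotone (fun n => measurableSet_Icc) hsm
      (by rw [hsU]; exact hφ'.mono_set Set.Ioc_subset_Icc_self)
    rwa [hsU] at this
  have hψlim : Filter.Tendsto (fun n => ∫ y in t n, ψ y) Filter.atTop
      (nhds (∫ y in Set.Ico (0:ℝ) 1, ψ y)) := by
    have := tendsto_setIntegral_of_monotone (fun n => measurableSet_Icc) htm
      (by rw [htU]; exact hψ'.mono_set Set.Ico_subset_Icc_self)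
    rwa [htU] at this
  have hioc : ∫ x in Set.Ioc (0:ℝ) 1, φ x = ∫ x, φ x ∂lam := by
    show _ = ∫ x in Set.Icc (0:ℝ) 1, φ x
    exact setIntegral_congr_set Ioc_ae_eq_Icc
  have hico : ∫ y in Set.Ico (0:ℝ) 1, ψ y = ∫ y, ψ y ∂lam := by
    show _ = ∫ y in Set.Icc (0:ℝ) 1, ψ y
    exact setIntegral_congr_set Ico_ae_eq_Icc
  have hbd : ∀ n : ℕ, (∫ x in s n, φ x) + ∫ y in t n, ψ y ≤ 0 := by
    intro n
    apply dual_bound_h φ ψ hφ' hψ' hc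
    · positivity
    · rw [div_le_one (by positivity)]
      linarith [Nat.cast_nonneg (α := ℝ) n]
  have hle := le_of_tendsto (hφlim.add hψlim) (Filter.Eventually.of_forall hbd)
  rwa [hioc, hico] at hle

theorem stmt6 :
    sInf {r : ℝ≥0∞ | ∃ π : Measure (ℝ × ℝ), IsProbabilityMeasure π ∧
        π.fst = lam ∧ π.snd = lam ∧ r = ∫⁻ p, cGap p ∂π} = 1 ∧
    sSup {d : ℝ | ∃ φ ψ : ℝ → ℝ, Integrable φ lam ∧ Integrable ψ lam ∧
        (∀ x ∈ Set.Icc (0 : ℝ) 1, ∀ y ∈ Set.Icc (0 : ℝ) 1,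
          ENNReal.ofReal (φ x + ψ y) ≤ cGap (x, y)) ∧
        d = ∫ x, φ x ∂lam + ∫ y, ψ y ∂lam} = 0 := by
  constructor
  · apply le_antisymm
    · apply sInf_le
      refine ⟨lam.map (fun x => (x, x)), ?_, diag_fst, diag_snd, diag_lintegral.symm⟩
      exact Measure.isProbabilityMeasure_map (measurable_id.prodMk measurable_id).aemeasurable
    · refine le_sInf ?_
      rintro r ⟨π, hp, h1, h2, rfl⟩
      exact part1_lower π hp h1 h2
  · have hub : ∀ d ∈ {d : ℝ | ∃ φ ψ : ℝ → ℝ, Integrable φ lam ∧ Integrable ψ lam ∧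
        (∀ x ∈ Set.Icc (0 : ℝ) 1, ∀ y ∈ Set.Icc (0 : ℝ) 1,
          ENNReal.ofReal (φ x + ψ y) ≤ cGap (x, y)) ∧
        d = ∫ x, φ x ∂lam + ∫ y, ψ y ∂lam}, d ≤ 0 := by
      rintro d ⟨φ, ψ, hφ, hψ, hc, rfl⟩
      exact dual_bound φ ψ hφ hψ hc
    have hmem : (0:ℝ) ∈ {d : ℝ | ∃ φ ψ : ℝ → ℝ, Integrable φ lam ∧ Integrable ψ lam ∧
        (∀ x ∈ Set.Icc (0 : ℝ) 1, ∀ y ∈ Set.Icc (0 : ℝ) 1,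
          ENNReal.ofReal (φ x + ψ y) ≤ cGap (x, y)) ∧
        d = ∫ x, φ x ∂lam + ∫ y, ψ y ∂lam} := by
      refine ⟨0, 0, integrable_zero _ _ _, integrable_zero _ _ _, ?_, by simp⟩
      intro x _ y _
      simp
    exact le_antisymm (csSup_le ⟨0, hmem⟩ hub) (le_csSup ⟨0, hub⟩ hmem)
end

section
/- Compact case of Kellerer's lemma: let λ be Lebesgue measure on [0,1] and let K ⊆ [0,1]² be compact with π(K) = 0 for every π ∈ Π(λ,λ). Then m(K) = 0, where m(K) = inf{λ(A) + λ(B) : K ⊆ (A × [0,1]) ∪ ([0,1] × B)}. Equivalently (contrapositive): if m(K) > 0 then there exists a nonzero nonnegative measure π supported on K whose marginals are dominated by λ. -/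
open MeasureTheory ENNReal Set Filter Topology TopologicalSpace

set_option maxHeartbeats 1000000




lemma koenig {n k : ℕ} (hk : k ≤ n) (t : Fin n → Finset (Fin n))
    (hcov : ∀ R C : Finset (Fin n), (∀ i j, j ∈ t i → i ∈ R ∨ j ∈ C) →
      k ≤ R.card + C.card) :
    ∃ (S : Finset (Fin n)) (f : Fin n → Fin n), k ≤ S.card ∧ Set.InjOn f S ∧
      ∀ i ∈ S, f i ∈ t i := by
  classical
  set t' : Fin n → Finset (Fin n ⊕ Fin (n - k)) :=
    fun i => (t i).image Sum.inl ∪ Finset.univ.image Sum.inr with ht'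
  have hall : ∀ s : Finset (Fin n), s.card ≤ (s.biUnion t').card := by
    intro s
    by_cases hs : s = ∅
    · subst hs; simp
    · have hsne : s.Nonempty := Finset.nonempty_iff_ne_empty.2 hs
      have heq : s.biUnion t' = (s.biUnion t).image Sum.inl ∪
          (Finset.univ : Finset (Fin (n - k))).image Sum.inr := by
        ext x
        simp only [ht', Finset.mem_biUnion, Finset.mem_union, Finset.mem_image,
          Finset.mem_univ, true_and]
        constructor
        · rintro ⟨i, hi, ⟨j, hj, rfl⟩ | ⟨j, rfl⟩⟩
          · exact Or.inl ⟨j, ⟨i, hi, hj⟩, rfl⟩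
          · exact Or.inr ⟨j, rfl⟩
        · rintro (⟨j, ⟨i, hi, hji⟩, rfl⟩ | ⟨j, rfl⟩)
          · exact ⟨i, hi, Or.inl ⟨j, hji, rfl⟩⟩
          · exact ⟨hsne.choose, hsne.choose_spec, Or.inr ⟨j, rfl⟩⟩
      have hdisj : Disjoint ((s.biUnion t).image Sum.inl)
          ((Finset.univ : Finset (Fin (n - k))).image Sum.inr) := by
        simp [Finset.disjoint_left]
      have hcard : (s.biUnion t').card = (s.biUnion t).card + (n - k) := by
        rw [heq, Finset.card_union_of_disjoint hdisj,
          Finset.card_image_of_injective _ Sum.inl_injective,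
          Finset.card_image_of_injective _ Sum.inr_injective, Finset.card_univ,
          Fintype.card_fin]
      have hcover : k ≤ (Finset.univ \ s).card + (s.biUnion t).card := by
        apply hcov
        intro i j hj
        by_cases hi : i ∈ s
        · exact Or.inr (Finset.mem_biUnion.2 ⟨i, hi, hj⟩)
        · exact Or.inl (by simpa [Finset.mem_sdiff] using hi)
      have hsle : s.card ≤ n := by
        simpa using Finset.card_le_card (Finset.subset_univ s)
      have hsd : (Finset.univ \ s).card = n - s.card := by
        rw [Finset.card_sdiff_of_subset (Finset.subset_univ s), Finset.card_univ, Fintype.card_fin]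
      rw [hcard]
      omega
  obtain ⟨g, hginj, hgmem⟩ :=
    (Finset.all_card_le_biUnion_card_iff_exists_injective t').1 hall
  refine ⟨Finset.univ.filter (fun i => (g i).isLeft),
    fun i => Sum.elim id (fun _ => i) (g i), ?_, ?_, ?_⟩
  · -- card bound
    have hcompl : (Finset.univ.filter (fun i => ¬ (g i).isLeft)).card ≤ n - k := by
      have hsub : (Finset.univ.filter (fun i => ¬ (g i).isLeft)).image g ⊆
          (Finset.univ : Finset (Fin (n - k))).image Sum.inr := by
        intro x hx
        rcases Finset.mem_image.1 hx with ⟨i, hi, rfl⟩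
        have : (g i).isRight := by
          rcases Finset.mem_filter.1 hi with ⟨_, h⟩
          simpa [Sum.not_isLeft] using h
        rcases Sum.isRight_iff.1 this with ⟨j, hj⟩
        rw [hj]
        exact Finset.mem_image_of_mem _ (Finset.mem_univ _)
      calc (Finset.univ.filter (fun i => ¬ (g i).isLeft)).card
          = ((Finset.univ.filter (fun i => ¬ (g i).isLeft)).image g).card :=
            (Finset.card_image_of_injective _ hginj).symm
        _ ≤ ((Finset.univ : Finset (Fin (n - k))).image Sum.inr).card :=
            Finset.card_le_card hsub
        _ ≤ n - k := by
            simpa using (Finset.card_image_le.trans (by simp))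
    have := Finset.card_filter_add_card_filter_not
      (s := (Finset.univ : Finset (Fin n))) (p := fun i => (g i).isLeft)
    simp only [Finset.card_univ, Fintype.card_fin] at this
    omega
  · -- InjOn
    intro i hi j hj hij
    have hgi := (Finset.mem_filter.1 hi).2
    have hgj := (Finset.mem_filter.1 hj).2
    rcases Sum.isLeft_iff.1 hgi with ⟨a, ha⟩
    rcases Sum.isLeft_iff.1 hgj with ⟨b, hb⟩
    apply hginj
    simp only [ha, hb, Sum.elim_inl, id] at hij
    rw [ha, hb, hij]
  · intro i hi
    have hgi := (Finset.mem_filter.1 hi).2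
    rcases Sum.isLeft_iff.1 hgi with ⟨a, ha⟩
    have hmem := hgmem i
    simp only [ha, Sum.elim_inl, id]
    rw [ha] at hmem
    rcases Finset.mem_union.1 hmem with h | h
    · rcases Finset.mem_image.1 h with ⟨j, hj, hji⟩
      have : j = a := Sum.inl_injective hji
      rwa [this] at hj
    · rcases Finset.mem_image.1 h with ⟨j, _, hji⟩
      exact absurd hji (by simp)




noncomputable def Jgrid (n : ℕ) (i : Fin (n+1)) : Set ℝ :=
  Set.Icc ((i : ℝ)/(n+1)) (((i : ℝ)+1)/(n+1))

lemma Jgrid_meas (n : ℕ) (i : Fin (n+1)) : MeasurableSet (Jgrid n i) :=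
  measurableSet_Icc

lemma volJ (n : ℕ) (i : Fin (n+1)) : volume (Jgrid n i) = ENNReal.ofReal (1/(n+1)) := by
  have hn : (0:ℝ) < (n:ℝ)+1 := by positivity
  rw [Jgrid, Real.volume_Icc]
  congr 1
  field_simp
  ring

lemma mulJ (n : ℕ) : ((n : ℝ≥0∞)+1) * ENNReal.ofReal (1/(n+1)) = 1 := by
  have hn : (0:ℝ) < (n:ℝ)+1 := by positivity
  rw [ENNReal.ofReal_div_of_pos hn, ENNReal.ofReal_one]
  rw [ENNReal.ofReal_add (by positivity) zero_le_one, ENNReal.ofReal_natCast,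
    ENNReal.ofReal_one]
  rw [one_div, ENNReal.mul_inv_cancel (fun h => one_ne_zero ((add_eq_zero.1 h).2))
    (by simp)]

lemma Jgrid_subset (n : ℕ) (i : Fin (n+1)) : Jgrid n i ⊆ Set.Icc (0:ℝ) 1 := by
  have hn : (0:ℝ) < (n:ℝ)+1 := by positivity
  intro x hx
  rcases hx with ⟨h1, h2⟩
  constructor
  · exact le_trans (by positivity) h1
  · refine h2.trans ?_
    rw [div_le_one hn]
    have : (i : ℝ) ≤ n := by
      have := i.isLt
      exact_mod_cast Nat.lt_succ_iff.1 this
    linarith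

lemma existsJ (n : ℕ) {x : ℝ} (hx : x ∈ Set.Icc (0:ℝ) 1) : ∃ i : Fin (n+1), x ∈ Jgrid n i := by
  have hn : (0:ℝ) < (n:ℝ)+1 := by positivity
  rcases hx with ⟨hx0, hx1⟩
  set i0 : ℕ := min ⌊x * ((n:ℝ)+1)⌋₊ n with hi0
  have hi0n : i0 < n + 1 := by omega
  refine ⟨⟨i0, hi0n⟩, ?_, ?_⟩
  · show (i0 : ℝ)/(n+1) ≤ x
    rw [div_le_iff₀ hn]
    calc (i0 : ℝ) ≤ ⌊x * ((n:ℝ)+1)⌋₊ := by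
          exact Nat.cast_le.2 (min_le_left _ _)
      _ ≤ x * ((n:ℝ)+1) := Nat.floor_le (by positivity)
  · show x ≤ ((i0 : ℝ)+1)/(n+1)
    rw [le_div_iff₀ hn]
    by_cases hc : ⌊x * ((n:ℝ)+1)⌋₊ ≤ n
    · have : i0 = ⌊x * ((n:ℝ)+1)⌋₊ := min_eq_left hc
      rw [this]
      have := Nat.lt_floor_add_one (x * ((n:ℝ)+1))
      linarith
    · have : i0 = n := min_eq_right (le_of_not_ge hc)
      rw [this]
      nlinarith

lemma Ico_grid_disjoint (n : ℕ) {i j : Fin (n+1)} (hij : i ≠ j) :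
    Disjoint (Set.Ico ((i : ℝ)/(n+1)) (((i : ℝ)+1)/(n+1)))
      (Set.Ico ((j : ℝ)/(n+1)) (((j : ℝ)+1)/(n+1))) := by
  have hn : (0:ℝ) < (n:ℝ)+1 := by positivity
  rw [Set.Ico_disjoint_Ico]
  rcases lt_or_gt_of_ne (Fin.val_ne_of_ne hij) with h | h
  · have h' : (i:ℝ) + 1 ≤ (j:ℝ) := by exact_mod_cast h
    refine le_trans (min_le_left _ _) (le_trans ?_ (le_max_right _ _))
    gcongr
  · have h' : (j:ℝ) + 1 ≤ (i:ℝ) := by exact_mod_cast h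
    refine le_trans (min_le_right _ _) (le_trans ?_ (le_max_left _ _))
    gcongr

lemma volIcoIcc (n : ℕ) (i : Fin (n+1)) (A : Set ℝ) :
    volume (A ∩ Jgrid n i) = volume (A ∩ Set.Ico ((i : ℝ)/(n+1)) (((i : ℝ)+1)/(n+1))) := by
  apply le_antisymm
  · have hsub : A ∩ Jgrid n i ⊆ (A ∩ Set.Ico ((i : ℝ)/(n+1)) (((i : ℝ)+1)/(n+1))) ∪
        {(((i : ℝ)+1)/(n+1))} := by
      rintro x ⟨hA, h1, h2⟩
      rcases lt_or_eq_of_le h2 with h | h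
      · exact Or.inl ⟨hA, h1, h⟩
      · exact Or.inr (by simp [h])
    calc volume (A ∩ Jgrid n i) ≤ _ + volume {(((i : ℝ)+1)/(n+1))} :=
          le_trans (measure_mono hsub) (measure_union_le _ _)
      _ = _ := by rw [Real.volume_singleton, add_zero]
  · exact measure_mono (Set.inter_subset_inter_right _ (Set.Ico_subset_Icc_self))

lemma gridSum (n : ℕ) (S : Finset (Fin (n+1))) {A : Set ℝ} (hA : MeasurableSet A) :
    ∑ i ∈ S, volume (A ∩ Jgrid n i) ≤ volume (A ∩ Set.Icc (0:ℝ) 1) := by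
  have h1 : ∑ i ∈ S, volume (A ∩ Jgrid n i)
      = ∑ i ∈ S, volume (A ∩ Set.Ico ((i : ℝ)/(n+1)) (((i : ℝ)+1)/(n+1))) := by
    exact Finset.sum_congr rfl fun i _ => volIcoIcc n i A
  rw [h1, ← measure_biUnion_finset]
  · apply measure_mono
    apply Set.iUnion₂_subset
    intro i _
    refine Set.inter_subset_inter_right _ ?_
    exact Set.Ico_subset_Icc_self.trans (Jgrid_subset n i)
  · intro i _ j _ hij
    exact (Ico_grid_disjoint n hij).mono (Set.inter_subset_right) (Set.inter_subset_right)
  · intro i _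
    exact hA.inter measurableSet_Ico



noncomputable def Qsq (n : ℕ) (i j : Fin (n+1)) : Set (ℝ × ℝ) :=
  Jgrid n i ×ˢ Jgrid n j

lemma Qsq_meas (n : ℕ) (i j : Fin (n+1)) : MeasurableSet (Qsq n i j) :=
  measurableSet_Icc.prod measurableSet_Icc

lemma vol_prod (s t : Set ℝ) : volume (s ×ˢ t) = volume s * volume t := by
  rw [Measure.volume_eq_prod, Measure.prod_prod]

section core

variable {K : Set (ℝ × ℝ)}

/-- measures built from matchings -/
noncomputable def pseq (S : ∀ n : ℕ, Finset (Fin (n+1))) (f : ∀ n : ℕ, Fin (n+1) → Fin (n+1))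
    (n : ℕ) : Measure (ℝ × ℝ) :=
  ∑ i ∈ S n, ((n : ℝ≥0∞)+1) • volume.restrict (Qsq n i (f n i))

lemma pseq_apply (S : ∀ n : ℕ, Finset (Fin (n+1))) (f : ∀ n : ℕ, Fin (n+1) → Fin (n+1))
    (n : ℕ) {E : Set (ℝ × ℝ)} (hE : MeasurableSet E) :
    pseq S f n E = ∑ i ∈ S n, ((n : ℝ≥0∞)+1) * volume (E ∩ Qsq n i (f n i)) := by
  rw [pseq, Measure.finset_sum_apply]
  refine Finset.sum_congr rfl fun i _ => ?_
  rw [Measure.smul_apply, smul_eq_mul, Measure.restrict_apply hE]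

lemma pseq_fst (S : ∀ n : ℕ, Finset (Fin (n+1))) (f : ∀ n : ℕ, Fin (n+1) → Fin (n+1))
    (n : ℕ) {U : Set ℝ} (hU : MeasurableSet U) :
    pseq S f n (U ×ˢ Set.univ) ≤ volume.restrict (Set.Icc (0:ℝ) 1) U := by
  rw [pseq_apply S f n (hU.prod MeasurableSet.univ), Measure.restrict_apply hU]
  have : ∀ i ∈ S n, ((n : ℝ≥0∞)+1) * volume ((U ×ˢ Set.univ) ∩ Qsq n i (f n i))
      = volume (U ∩ Jgrid n i) := by
    intro i _
    rw [Qsq, Set.prod_inter_prod, Set.univ_inter, vol_prod, volJ,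
      show ((n : ℝ≥0∞)+1) * (volume (U ∩ Jgrid n i) * ENNReal.ofReal (1/(n+1)))
        = (((n : ℝ≥0∞)+1) * ENNReal.ofReal (1/(n+1))) * volume (U ∩ Jgrid n i) by ring,
      mulJ, one_mul]
  rw [Finset.sum_congr rfl this]
  exact gridSum n (S n) hU

lemma pseq_snd (S : ∀ n : ℕ, Finset (Fin (n+1))) (f : ∀ n : ℕ, Fin (n+1) → Fin (n+1))
    (hinj : ∀ n, Set.InjOn (f n) (S n)) (n : ℕ) {B : Set ℝ} (hB : MeasurableSet B) :
    pseq S f n (Set.univ ×ˢ B) ≤ volume.restrict (Set.Icc (0:ℝ) 1) B := by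
  rw [pseq_apply S f n (MeasurableSet.univ.prod hB), Measure.restrict_apply hB]
  have h1 : ∀ i ∈ S n, ((n : ℝ≥0∞)+1) * volume ((Set.univ ×ˢ B) ∩ Qsq n i (f n i))
      = volume (B ∩ Jgrid n (f n i)) := by
    intro i _
    rw [Qsq, Set.prod_inter_prod, Set.univ_inter, vol_prod, volJ,
      show ((n : ℝ≥0∞)+1) * (ENNReal.ofReal (1/(n+1)) * volume (B ∩ Jgrid n (f n i)))
        = (((n : ℝ≥0∞)+1) * ENNReal.ofReal (1/(n+1))) * volume (B ∩ Jgrid n (f n i)) by ring,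
      mulJ, one_mul]
  rw [Finset.sum_congr rfl h1]
  have h2 : ∑ i ∈ S n, volume (B ∩ Jgrid n (f n i))
      = ∑ j ∈ (S n).image (f n), volume (B ∩ Jgrid n j) :=
    (Finset.sum_image (f := fun j => volume (B ∩ Jgrid n j))
      (fun x hx y hy h => hinj n hx hy h)).symm
  rw [h2]
  exact gridSum n ((S n).image (f n)) hB

lemma pseq_mass (S : ∀ n : ℕ, Finset (Fin (n+1))) (f : ∀ n : ℕ, Fin (n+1) → Fin (n+1))
    (n : ℕ) {U : Set (ℝ × ℝ)} (hU : MeasurableSet U)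
    (h : ∀ i ∈ S n, Qsq n i (f n i) ⊆ U) :
    ((S n).card : ℝ≥0∞) * ENNReal.ofReal (1/(n+1)) ≤ pseq S f n U := by
  rw [pseq_apply S f n hU]
  have h1 : ∀ i ∈ S n, ((n : ℝ≥0∞)+1) * volume (U ∩ Qsq n i (f n i))
      = ENNReal.ofReal (1/(n+1)) := by
    intro i hi
    rw [Set.inter_eq_right.2 (h i hi), Qsq, vol_prod, volJ, volJ,
      show ((n : ℝ≥0∞)+1) * (ENNReal.ofReal (1/(n+1)) * ENNReal.ofReal (1/(n+1)))
        = (((n : ℝ≥0∞)+1) * ENNReal.ofReal (1/(n+1))) * ENNReal.ofReal (1/(n+1)) by ring,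
      mulJ, one_mul]
  rw [Finset.sum_congr rfl h1, Finset.sum_const, nsmul_eq_mul]

lemma pseq_zero (S : ∀ n : ℕ, Finset (Fin (n+1))) (f : ∀ n : ℕ, Fin (n+1) → Fin (n+1))
    (n : ℕ) {V : Set (ℝ × ℝ)} (hV : MeasurableSet V)
    (h : ∀ i ∈ S n, V ∩ Qsq n i (f n i) = ∅) :
    pseq S f n V = 0 := by
  rw [pseq_apply S f n hV]
  refine Finset.sum_eq_zero fun i hi => ?_
  rw [h i hi, measure_empty, mul_zero]

lemma Qsq_dist (n : ℕ) (i j : Fin (n+1)) {p z : ℝ × ℝ} (hp : p ∈ Qsq n i j)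
    (hz : z ∈ Qsq n i j) : dist p z ≤ 1/(n+1) := by
  have hn : (0:ℝ) < (n:ℝ)+1 := by positivity
  obtain ⟨hp1, hp2⟩ := hp
  obtain ⟨hz1, hz2⟩ := hz
  simp only [Jgrid, Set.mem_Icc] at hp1 hp2 hz1 hz2
  have hdi : ((i:ℝ)+1)/((n:ℝ)+1) - (i:ℝ)/((n:ℝ)+1) = 1/((n:ℝ)+1) := by
    rw [div_sub_div_same]; ring_nf
  have hdj : ((j:ℝ)+1)/((n:ℝ)+1) - (j:ℝ)/((n:ℝ)+1) = 1/((n:ℝ)+1) := by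
    rw [div_sub_div_same]; ring_nf
  rw [Prod.dist_eq, max_le_iff]
  constructor <;> rw [Real.dist_eq, abs_sub_le_iff] <;> constructor <;>
    linarith [hp1.1, hp1.2, hz1.1, hz1.2, hp2.1, hp2.2, hz2.1, hz2.2]

lemma Qsq_subset_thickening {n : ℕ} {i j : Fin (n+1)} (hQK : (Qsq n i j ∩ K).Nonempty)
    {δ : ℝ} (hδ : 1/((n:ℝ)+1) < δ) : Qsq n i j ⊆ Metric.thickening δ K := by
  obtain ⟨z, hzQ, hzK⟩ := hQK
  intro p hp
  rw [Metric.mem_thickening_iff]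
  exact ⟨z, hzK, lt_of_le_of_lt (Qsq_dist n i j hp hzQ) hδ⟩

end core




noncomputable def ULim (F : Ultrafilter ℕ) (g : ℕ → ℝ≥0∞) : ℝ≥0∞ := (F.map g).lim

lemma ULim_tendsto (F : Ultrafilter ℕ) (g : ℕ → ℝ≥0∞) :
    Tendsto g (F : Filter ℕ) (𝓝 (ULim F g)) :=
  (F.map g).le_nhds_lim

lemma ULim_unique {F : Ultrafilter ℕ} {g : ℕ → ℝ≥0∞} {a : ℝ≥0∞}
    (h : Tendsto g (F : Filter ℕ) (𝓝 a)) : ULim F g = a :=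
  tendsto_nhds_unique (ULim_tendsto F g) h

lemma ULim_le_const {F : Ultrafilter ℕ} {g : ℕ → ℝ≥0∞} {c : ℝ≥0∞}
    (h : ∀ᶠ n in (F : Filter ℕ), g n ≤ c) : ULim F g ≤ c :=
  le_of_tendsto (ULim_tendsto F g) h

lemma const_le_ULim {F : Ultrafilter ℕ} {g : ℕ → ℝ≥0∞} {c : ℝ≥0∞}
    (h : ∀ᶠ n in (F : Filter ℕ), c ≤ g n) : c ≤ ULim F g :=
  ge_of_tendsto (ULim_tendsto F g) h

lemma ULim_mono {F : Ultrafilter ℕ} {g h : ℕ → ℝ≥0∞}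
    (hgh : ∀ n, g n ≤ h n) : ULim F g ≤ ULim F h :=
  le_of_tendsto_of_tendsto (ULim_tendsto F g) (ULim_tendsto F h)
    (Filter.Eventually.of_forall hgh)

lemma ULim_add (F : Ultrafilter ℕ) (g h : ℕ → ℝ≥0∞) :
    ULim F (fun n => g n + h n) = ULim F g + ULim F h :=
  ULim_unique ((ULim_tendsto F g).add (ULim_tendsto F h))

lemma ULim_congr {F : Ultrafilter ℕ} {g h : ℕ → ℝ≥0∞}
    (hgh : ∀ᶠ n in (F : Filter ℕ), g n = h n) : ULim F g = ULim F h :=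
  ULim_unique ((ULim_tendsto F h).congr' (by filter_upwards [hgh] with n hn; exact hn.symm))

lemma ULim_zero {F : Ultrafilter ℕ} {g : ℕ → ℝ≥0∞}
    (h : ∀ᶠ n in (F : Filter ℕ), g n = 0) : ULim F g = 0 :=
  le_antisymm (ULim_le_const (by filter_upwards [h] with n hn; simp [hn])) (zero_le)



section content
variable (S : ∀ n : ℕ, Finset (Fin (n+1))) (f : ∀ n : ℕ, Fin (n+1) → Fin (n+1))
  (F : Ultrafilter ℕ)

noncomputable def contFun (C : Set (ℝ × ℝ)) : ℝ≥0∞ :=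
  ⨅ (U : {U : Set (ℝ × ℝ) // IsOpen U ∧ C ⊆ U}), ULim F (fun n => pseq S f n ↑U)

lemma pseq_le_one (n : ℕ) (E : Set (ℝ × ℝ)) : pseq S f n E ≤ 1 := by
  refine (measure_mono (Set.subset_univ E)).trans ?_
  rw [← Set.univ_prod_univ]
  refine (pseq_fst S f n MeasurableSet.univ).trans ?_
  rw [Measure.restrict_apply MeasurableSet.univ, Set.univ_inter, Real.volume_Icc]
  norm_num

lemma ULim_pseq_le_one (E : Set (ℝ × ℝ)) : ULim F (fun n => pseq S f n E) ≤ 1 :=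
  ULim_le_const (Eventually.of_forall fun n => pseq_le_one S f n E)

lemma contFun_le {C U : Set (ℝ × ℝ)} (hU : IsOpen U) (hsub : C ⊆ U) :
    contFun S f F C ≤ ULim F (fun n => pseq S f n U) :=
  iInf_le (fun U : {U : Set (ℝ × ℝ) // IsOpen U ∧ C ⊆ U} => ULim F (fun n => pseq S f n ↑U)) ⟨U, hU, hsub⟩

lemma contFun_le_one (C : Set (ℝ × ℝ)) : contFun S f F C ≤ 1 :=
  (contFun_le S f F isOpen_univ (Set.subset_univ C)).trans (ULim_pseq_le_one S f F _)

lemma contFun_ne_top (C : Set (ℝ × ℝ)) : contFun S f F C ≠ ∞ :=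
  (lt_of_le_of_lt (contFun_le_one S f F C) one_lt_top).ne

lemma le_contFun {x : ℝ≥0∞} {C : Set (ℝ × ℝ)}
    (h : ∀ U : Set (ℝ × ℝ), IsOpen U → C ⊆ U → x ≤ ULim F (fun n => pseq S f n U)) :
    x ≤ contFun S f F C :=
  le_iInf fun U => h U U.2.1 U.2.2

lemma contFun_mono {C1 C2 : Set (ℝ × ℝ)} (h : C1 ⊆ C2) :
    contFun S f F C1 ≤ contFun S f F C2 :=
  le_contFun S f F fun U hU hsub => contFun_le S f F hU (h.trans hsub)

lemma contFun_union_le (C1 C2 : Set (ℝ × ℝ)) :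
    contFun S f F (C1 ∪ C2) ≤ contFun S f F C1 + contFun S f F C2 := by
  have key : ∀ (U1 : {U : Set (ℝ × ℝ) // IsOpen U ∧ C1 ⊆ U})
      (U2 : {U : Set (ℝ × ℝ) // IsOpen U ∧ C2 ⊆ U}),
      contFun S f F (C1 ∪ C2) ≤ ULim F (fun n => pseq S f n ↑U1)
        + ULim F (fun n => pseq S f n ↑U2) := by
    intro U1 U2
    refine (contFun_le S f F (U1.2.1.union U2.2.1)
      (Set.union_subset_union U1.2.2 U2.2.2)).trans ?_
    refine (ULim_mono fun n => measure_union_le _ _).trans ?_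
    exact le_of_eq (ULim_add F _ _)
  calc contFun S f F C1 + contFun S f F C2
      = ⨅ (U1 : {U : Set (ℝ × ℝ) // IsOpen U ∧ C1 ⊆ U}),
          (ULim F (fun n => pseq S f n ↑U1) + contFun S f F C2) := ENNReal.iInf_add
    _ = ⨅ (U1 : {U : Set (ℝ × ℝ) // IsOpen U ∧ C1 ⊆ U})
          (U2 : {U : Set (ℝ × ℝ) // IsOpen U ∧ C2 ⊆ U}),
          (ULim F (fun n => pseq S f n ↑U1) + ULim F (fun n => pseq S f n ↑U2)) :=
        iInf_congr fun U1 => ENNReal.add_iInf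
    _ ≥ contFun S f F (C1 ∪ C2) := le_iInf fun U1 => le_iInf fun U2 => key U1 U2

lemma contFun_union_eq {C1 C2 : Set (ℝ × ℝ)} (h1 : IsCompact C1) (h2 : IsCompact C2)
    (hd : Disjoint C1 C2) :
    contFun S f F (C1 ∪ C2) = contFun S f F C1 + contFun S f F C2 := by
  refine le_antisymm (contFun_union_le S f F C1 C2) ?_
  obtain ⟨δ, hδ0, hδd⟩ := hd.exists_thickenings h1 h2.isClosed
  refine le_contFun S f F fun U hUo hsub => ?_
  set W1 : Set (ℝ × ℝ) := U ∩ Metric.thickening δ C1 with hW1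
  set W2 : Set (ℝ × ℝ) := U ∩ Metric.thickening δ C2 with hW2
  have e1 : contFun S f F C1 ≤ ULim F (fun n => pseq S f n W1) :=
    contFun_le S f F (hUo.inter Metric.isOpen_thickening)
      (Set.subset_inter ((Set.subset_union_left).trans hsub)
        (Metric.self_subset_thickening hδ0 _))
  have e2 : contFun S f F C2 ≤ ULim F (fun n => pseq S f n W2) :=
    contFun_le S f F (hUo.inter Metric.isOpen_thickening)
      (Set.subset_inter ((Set.subset_union_right).trans hsub)
        (Metric.self_subset_thickening hδ0 _))
  have hdisjW : Disjoint W1 W2 :=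
    (hδd.mono (Set.inter_subset_right) (Set.inter_subset_right))
  calc contFun S f F C1 + contFun S f F C2
      ≤ ULim F (fun n => pseq S f n W1) + ULim F (fun n => pseq S f n W2) :=
        add_le_add e1 e2
    _ = ULim F (fun n => pseq S f n W1 + pseq S f n W2) := (ULim_add F _ _).symm
    _ = ULim F (fun n => pseq S f n (W1 ∪ W2)) := by
        refine ULim_congr (Eventually.of_forall fun n => ?_)
        exact (measure_union hdisjW
          ((hUo.inter Metric.isOpen_thickening).measurableSet)).symm
    _ ≤ ULim F (fun n => pseq S f n U) := ULim_mono fun n =>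
        measure_mono (Set.union_subset Set.inter_subset_left Set.inter_subset_left)

noncomputable def contentOf : Content (ℝ × ℝ) where
  toFun C := (contFun S f F ↑C).toNNReal
  mono' C1 C2 h := ENNReal.toNNReal_mono (contFun_ne_top S f F _) (contFun_mono S f F h)
  sup_disjoint' C1 C2 hd _ _ := by
    simp only [Compacts.coe_sup]
    rw [← ENNReal.toNNReal_add (contFun_ne_top S f F _) (contFun_ne_top S f F _)]
    congr 1
    exact contFun_union_eq S f F C1.2 C2.2 hd
  sup_le' C1 C2 := by
    simp only [Compacts.coe_sup]
    have h := ENNReal.toNNReal_mono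
      (ENNReal.add_ne_top.2 ⟨contFun_ne_top S f F _, contFun_ne_top S f F _⟩)
      (contFun_union_le S f F ↑C1 ↑C2)
    rwa [ENNReal.toNNReal_add (contFun_ne_top S f F _) (contFun_ne_top S f F _)] at h

lemma contentOf_apply (C : Compacts (ℝ × ℝ)) :
    (contentOf S f F C : ℝ≥0∞) = contFun S f F ↑C :=
  ENNReal.coe_toNNReal (contFun_ne_top S f F _)

lemma measure_open_le {W : Set (ℝ × ℝ)} (hW : IsOpen W) :
    (contentOf S f F).measure W ≤ ULim F (fun n => pseq S f n W) := by
  rw [Content.measure_apply _ hW.measurableSet,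
    (contentOf S f F).outerMeasure_of_isOpen W hW]
  refine iSup₂_le fun Cc hCc => ?_
  rw [contentOf_apply]
  exact contFun_le S f F hW hCc

lemma le_measure_compact {C : Set (ℝ × ℝ)} (hC : IsCompact C) :
    contFun S f F C ≤ (contentOf S f F).measure C := by
  rw [Content.measure_apply _ hC.measurableSet]
  have := (contentOf S f F).le_outerMeasure_compacts ⟨C, hC⟩
  rwa [contentOf_apply] at this

end content

lemma contentOf_innerContent (S : ∀ n : ℕ, Finset (Fin (n+1)))
    (f : ∀ n : ℕ, Fin (n+1) → Fin (n+1)) (F : Ultrafilter ℕ) {W : Set (ℝ × ℝ)} (hW : IsOpen W)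
    (h : ∀ C : Compacts (ℝ × ℝ), (C : Set (ℝ × ℝ)) ⊆ W → contFun S f F ↑C = 0) :
    (contentOf S f F).measure W = 0 := by
  refine le_antisymm ?_ (zero_le)
  rw [Content.measure_apply _ hW.measurableSet,
    (contentOf S f F).outerMeasure_of_isOpen W hW]
  refine iSup₂_le fun Cc hCc => ?_
  rw [contentOf_apply, h Cc hCc]




lemma exists_subcoupling (K : Set (ℝ × ℝ)) (hK : IsCompact K)
    (hKsub : K ⊆ Set.Icc (0 : ℝ) 1 ×ˢ Set.Icc (0 : ℝ) 1)
    (ε : ℝ≥0∞) (hε0 : ε ≠ 0) (hε1 : ε ≤ 1)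
    (hcov : ∀ (A B : Set ℝ), MeasurableSet A → MeasurableSet B →
      K ⊆ (A ×ˢ Set.univ) ∪ (Set.univ ×ˢ B) →
      ε ≤ volume.restrict (Set.Icc (0:ℝ) 1) A + volume.restrict (Set.Icc (0:ℝ) 1) B) :
    ∃ μ : Measure (ℝ × ℝ), μ Kᶜ = 0 ∧ ε ≤ μ K ∧
      μ.fst ≤ volume.restrict (Set.Icc (0:ℝ) 1) ∧
      μ.snd ≤ volume.restrict (Set.Icc (0:ℝ) 1) := by
  classical
  have hεtop : ε ≠ ∞ := (lt_of_le_of_lt hε1 one_lt_top).ne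
  have hεR : 0 < ε.toReal := ENNReal.toReal_pos hε0 hεtop
  have hofReal : ENNReal.ofReal ε.toReal = ε := ENNReal.ofReal_toReal hεtop
  have hεR1 : ε.toReal ≤ 1 := by
    have := ENNReal.toReal_mono one_ne_top hε1
    simpa using this
  have hofmul : ∀ n : ℕ, ENNReal.ofReal (ε.toReal * ((n:ℝ)+1)) = ε * ((n:ℝ≥0∞)+1) := by
    intro n
    rw [ENNReal.ofReal_mul hεR.le, hofReal]
    congr 1
    rw [ENNReal.ofReal_add (by positivity) zero_le_one, ENNReal.ofReal_natCast,
      ENNReal.ofReal_one]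
  have hεceil : ∀ n : ℕ, ε * ((n:ℝ≥0∞)+1) ≤ (⌈ε.toReal * ((n:ℝ)+1)⌉₊ : ℝ≥0∞) := by
    intro n
    rw [← hofmul n, ← ENNReal.ofReal_natCast]
    exact ENNReal.ofReal_le_ofReal (Nat.le_ceil _)
  -- matchings
  have hex : ∀ n : ℕ, ∃ (Sn : Finset (Fin (n+1))) (fn : Fin (n+1) → Fin (n+1)),
      ⌈ε.toReal * ((n:ℝ)+1)⌉₊ ≤ Sn.card ∧ Set.InjOn fn (Sn : Set (Fin (n+1))) ∧
      ∀ i ∈ Sn, (Qsq n i (fn i) ∩ K).Nonempty := by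
    intro n
    set t : Fin (n+1) → Finset (Fin (n+1)) :=
      fun i => Finset.univ.filter (fun j => (Qsq n i j ∩ K).Nonempty) with ht
    have hkn : ⌈ε.toReal * ((n:ℝ)+1)⌉₊ ≤ n+1 := by
      rw [Nat.ceil_le]
      push_cast
      nlinarith [hεR, hεR1]
    have hcovk : ∀ R C : Finset (Fin (n+1)), (∀ i j, j ∈ t i → i ∈ R ∨ j ∈ C) →
        ⌈ε.toReal * ((n:ℝ)+1)⌉₊ ≤ R.card + C.card := by
      intro R C hRC
      set A : Set ℝ := ⋃ i ∈ R, Jgrid n i with hA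
      set B : Set ℝ := ⋃ j ∈ C, Jgrid n j with hB
      have hAm : MeasurableSet A := R.measurableSet_biUnion (fun i _ => Jgrid_meas n i)
      have hBm : MeasurableSet B := C.measurableSet_biUnion (fun j _ => Jgrid_meas n j)
      have hsub : K ⊆ (A ×ˢ Set.univ) ∪ (Set.univ ×ˢ B) := by
        rintro ⟨x, y⟩ hxy
        obtain ⟨hx, hy⟩ := hKsub hxy
        obtain ⟨i, hi⟩ := existsJ n hx
        obtain ⟨j, hj⟩ := existsJ n hy
        have hjt : j ∈ t i := by
          rw [ht]
          simp only [Finset.mem_filter, Finset.mem_univ, true_and]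
          exact ⟨(x, y), ⟨⟨hi, hj⟩, hxy⟩⟩
        rcases hRC i j hjt with h | h
        · exact Or.inl ⟨Set.mem_biUnion h hi, trivial⟩
        · exact Or.inr ⟨trivial, Set.mem_biUnion h hj⟩
      have hle := hcov A B hAm hBm hsub
      have hAle : volume.restrict (Set.Icc (0:ℝ) 1) A
          ≤ (R.card : ℝ≥0∞) * ENNReal.ofReal (1/(n+1)) := by
        refine (Measure.restrict_apply_le _ _).trans ?_
        refine (measure_biUnion_finset_le R _).trans ?_
        rw [Finset.sum_congr rfl (fun i _ => volJ n i), Finset.sum_const, nsmul_eq_mul]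
      have hBle : volume.restrict (Set.Icc (0:ℝ) 1) B
          ≤ (C.card : ℝ≥0∞) * ENNReal.ofReal (1/(n+1)) := by
        refine (Measure.restrict_apply_le _ _).trans ?_
        refine (measure_biUnion_finset_le C _).trans ?_
        rw [Finset.sum_congr rfl (fun j _ => volJ n j), Finset.sum_const, nsmul_eq_mul]
      have hRC2 : ε ≤ ((R.card + C.card : ℕ) : ℝ≥0∞) * ENNReal.ofReal (1/(n+1)) := by
        refine hle.trans ?_
        push_cast
        rw [add_mul]
        exact add_le_add hAle hBle
      have h2 : ε * ((n:ℝ≥0∞)+1) ≤ ((R.card + C.card : ℕ) : ℝ≥0∞) := by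
        calc ε * ((n:ℝ≥0∞)+1)
            ≤ (((R.card + C.card : ℕ) : ℝ≥0∞) * ENNReal.ofReal (1/(n+1))) * ((n:ℝ≥0∞)+1) :=
              mul_le_mul_left hRC2 _
          _ = ((R.card + C.card : ℕ) : ℝ≥0∞) * (((n:ℝ≥0∞)+1) * ENNReal.ofReal (1/(n+1))) := by
              ring
          _ = _ := by rw [mulJ, mul_one]
      rw [Nat.ceil_le]
      have h4 : ENNReal.ofReal (ε.toReal * ((n:ℝ)+1)) ≤ ((R.card + C.card : ℕ) : ℝ≥0∞) :=
        (hofmul n) ▸ h2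
      have h5 := ENNReal.toReal_mono (ENNReal.natCast_ne_top _) h4
      rw [ENNReal.toReal_ofReal (by positivity)] at h5
      rw [ENNReal.toReal_natCast] at h5
      simpa using h5
    obtain ⟨Sn, fn, h1, h2, h3⟩ := koenig hkn t hcovk
    refine ⟨Sn, fn, h1, h2, fun i hi => ?_⟩
    have := h3 i hi
    rw [ht] at this
    simpa using this
  choose S f hScard hSinj hSK using hex
  -- ultrafilter
  set F : Ultrafilter ℕ := Ultrafilter.of atTop with hF
  have hFle : (F : Filter ℕ) ≤ atTop := Ultrafilter.of_le _
  have hsmall : ∀ δ : ℝ, 0 < δ → ∀ᶠ (n : ℕ) in (F : Filter ℕ), 1/((n:ℝ)+1) < δ := by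
    intro δ hδ
    exact (tendsto_one_div_add_atTop_nhds_zero_nat.eventually
      (gt_mem_nhds hδ)).filter_mono hFle
  -- mass lower bound
  have hmassn : ∀ n : ℕ, ∀ U : Set (ℝ × ℝ), MeasurableSet U →
      (∀ i ∈ S n, Qsq n i (f n i) ⊆ U) → ε ≤ pseq S f n U := by
    intro n U hU hQU
    refine le_trans ?_ (pseq_mass S f n hU hQU)
    calc ε = ε * (((n:ℝ≥0∞)+1) * ENNReal.ofReal (1/(n+1))) := by rw [mulJ, mul_one]
      _ = (ε * ((n:ℝ≥0∞)+1)) * ENNReal.ofReal (1/(n+1)) := by ring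
      _ ≤ (⌈ε.toReal * ((n:ℝ)+1)⌉₊ : ℝ≥0∞) * ENNReal.ofReal (1/(n+1)) :=
          mul_le_mul_left (hεceil n) _
      _ ≤ ((S n).card : ℝ≥0∞) * ENNReal.ofReal (1/(n+1)) :=
          mul_le_mul_left (Nat.cast_le.2 (hScard n)) _
  set μ : Measure (ℝ × ℝ) := (contentOf S f F).measure with hμ
  refine ⟨μ, ?_, ?_, ?_, ?_⟩
  · -- μ Kᶜ = 0
    refine contentOf_innerContent S f F hK.isClosed.isOpen_compl fun Cc hCc => ?_
    have hdis : Disjoint (Cc : Set (ℝ × ℝ)) K := Set.subset_compl_iff_disjoint_right.1 hCc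
    obtain ⟨δ, hδ0, hδd⟩ := hdis.exists_thickenings Cc.2 hK.isClosed
    refine le_antisymm ?_ (zero_le)
    refine le_trans (contFun_le S f F Metric.isOpen_thickening
      (Metric.self_subset_thickening hδ0 _)) ?_
    refine le_of_eq (ULim_zero ?_)
    filter_upwards [hsmall δ hδ0] with n hn
    refine pseq_zero S f n Metric.isOpen_thickening.measurableSet fun i hi => ?_
    rw [← Set.disjoint_iff_inter_eq_empty]
    exact hδd.mono_right (Qsq_subset_thickening (hSK n i hi) hn)
  · -- ε ≤ μ K
    refine le_trans ?_ (le_measure_compact S f F hK)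
    refine le_contFun S f F fun U hUo hKU => ?_
    obtain ⟨δ, hδ0, hδsub⟩ := hK.exists_thickening_subset_open hUo hKU
    refine const_le_ULim ?_
    filter_upwards [hsmall δ hδ0] with n hn
    exact hmassn n U hUo.measurableSet
      (fun i hi => (Qsq_subset_thickening (hSK n i hi) hn).trans hδsub)
  · -- fst
    rw [Measure.le_iff]
    intro A hA
    rw [Measure.restrict_apply hA,
      Set.measure_eq_iInf_isOpen (A ∩ Set.Icc (0:ℝ) 1) volume]
    refine le_iInf fun V => le_iInf fun hVsub => le_iInf fun hVo => ?_
    set W : Set ℝ := V ∪ (Set.Icc (0:ℝ) 1)ᶜ with hW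
    have hWo : IsOpen W := hVo.union isClosed_Icc.isOpen_compl
    have h1 : μ.fst A ≤ μ.fst W := by
      refine measure_mono fun x hx => ?_
      by_cases hxI : x ∈ Set.Icc (0:ℝ) 1
      · exact Or.inl (hVsub ⟨hx, hxI⟩)
      · exact Or.inr hxI
    have h2 : μ.fst W = μ (W ×ˢ Set.univ) := by
      rw [Measure.fst_apply hWo.measurableSet, ← Set.prod_univ]
    have h3 : μ (W ×ˢ Set.univ) ≤ ULim F (fun n => pseq S f n (W ×ˢ Set.univ)) :=
      measure_open_le S f F (hWo.prod isOpen_univ)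
    have h4 : ULim F (fun n => pseq S f n (W ×ˢ Set.univ))
        ≤ volume.restrict (Set.Icc (0:ℝ) 1) W :=
      ULim_le_const (Eventually.of_forall fun n => pseq_fst S f n hWo.measurableSet)
    have h5 : volume.restrict (Set.Icc (0:ℝ) 1) W ≤ volume V := by
      rw [Measure.restrict_apply hWo.measurableSet]
      refine measure_mono fun x hx => ?_
      rcases hx.1 with h | h
      · exact h
      · exact absurd hx.2 h
    exact h1.trans (h2 ▸ h3.trans (h4.trans h5))
  · -- snd
    rw [Measure.le_iff]
    intro B hB
    rw [Measure.restrict_apply hB,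
      Set.measure_eq_iInf_isOpen (B ∩ Set.Icc (0:ℝ) 1) volume]
    refine le_iInf fun V => le_iInf fun hVsub => le_iInf fun hVo => ?_
    set W : Set ℝ := V ∪ (Set.Icc (0:ℝ) 1)ᶜ with hW
    have hWo : IsOpen W := hVo.union isClosed_Icc.isOpen_compl
    have h1 : μ.snd B ≤ μ.snd W := by
      refine measure_mono fun x hx => ?_
      by_cases hxI : x ∈ Set.Icc (0:ℝ) 1
      · exact Or.inl (hVsub ⟨hx, hxI⟩)
      · exact Or.inr hxI
    have h2 : μ.snd W = μ (Set.univ ×ˢ W) := by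
      rw [Measure.snd_apply hWo.measurableSet, ← Set.univ_prod]
    have h3 : μ (Set.univ ×ˢ W) ≤ ULim F (fun n => pseq S f n (Set.univ ×ˢ W)) :=
      measure_open_le S f F (isOpen_univ.prod hWo)
    have h4 : ULim F (fun n => pseq S f n (Set.univ ×ˢ W))
        ≤ volume.restrict (Set.Icc (0:ℝ) 1) W :=
      ULim_le_const (Eventually.of_forall fun n => pseq_snd S f hSinj n hWo.measurableSet)
    have h5 : volume.restrict (Set.Icc (0:ℝ) 1) W ≤ volume V := by
      rw [Measure.restrict_apply hWo.measurableSet]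
      refine measure_mono fun x hx => ?_
      rcases hx.1 with h | h
      · exact h
      · exact absurd hx.2 h
    exact h1.trans (h2 ▸ h3.trans (h4.trans h5))



theorem stmt14
    (K : Set (ℝ × ℝ)) (hK : IsCompact K)
    (hKsub : K ⊆ Set.Icc (0 : ℝ) 1 ×ˢ Set.Icc (0 : ℝ) 1)
    (hnull : ∀ π : Measure (ℝ × ℝ), IsProbabilityMeasure π →
      π.fst = volume.restrict (Set.Icc (0 : ℝ) 1) →
      π.snd = volume.restrict (Set.Icc (0 : ℝ) 1) → π K = 0) :
    sInf {r : ℝ≥0∞ | ∃ (A B : Set ℝ), MeasurableSet A ∧ MeasurableSet B ∧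
      K ⊆ (A ×ˢ Set.univ) ∪ (Set.univ ×ˢ B) ∧
      r = volume.restrict (Set.Icc (0 : ℝ) 1) A + volume.restrict (Set.Icc (0 : ℝ) 1) B} = 0 := by
  classical
  by_contra hm0
  set lam : Measure ℝ := volume.restrict (Set.Icc (0:ℝ) 1) with hlam
  have hlamuniv : lam Set.univ = 1 := by
    rw [hlam, Measure.restrict_apply MeasurableSet.univ, Set.univ_inter, Real.volume_Icc]
    norm_num
  haveI hlamfin : IsFiniteMeasure lam :=
    ⟨by rw [hlamuniv]; exact one_lt_top⟩
  set m : ℝ≥0∞ := sInf {r : ℝ≥0∞ | ∃ (A B : Set ℝ), MeasurableSet A ∧ MeasurableSet B ∧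
      K ⊆ (A ×ˢ Set.univ) ∪ (Set.univ ×ˢ B) ∧
      r = volume.restrict (Set.Icc (0 : ℝ) 1) A + volume.restrict (Set.Icc (0 : ℝ) 1) B}
    with hm
  set ε : ℝ≥0∞ := min m 1 with hε
  have hε0 : ε ≠ 0 := by
    rw [hε]
    refine ne_of_gt (lt_min ?_ one_pos)
    exact pos_iff_ne_zero.2 hm0
  have hε1 : ε ≤ 1 := min_le_right _ _
  have hcov : ∀ (A B : Set ℝ), MeasurableSet A → MeasurableSet B →
      K ⊆ (A ×ˢ Set.univ) ∪ (Set.univ ×ˢ B) →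
      ε ≤ volume.restrict (Set.Icc (0:ℝ) 1) A + volume.restrict (Set.Icc (0:ℝ) 1) B := by
    intro A B hA hB hsub
    refine (min_le_left _ _).trans ?_
    exact sInf_le ⟨A, B, hA, hB, hsub, rfl⟩
  obtain ⟨μ, hμKc, hμK, hfst, hsnd⟩ := exists_subcoupling K hK hKsub ε hε0 hε1 hcov
  haveI hμfin : IsFiniteMeasure μ := by
    refine ⟨?_⟩
    rw [← Measure.fst_univ]
    exact lt_of_le_of_lt ((Measure.le_iff'.1 hfst Set.univ).trans hlamuniv.le) one_lt_top
  set t : ℝ≥0∞ := μ Set.univ with htdef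
  have htfst : μ.fst Set.univ = t := Measure.fst_univ
  have htsnd : μ.snd Set.univ = t := Measure.snd_univ
  have ht1 : t ≤ 1 := by
    rw [← htfst]
    exact (Measure.le_iff'.1 hfst Set.univ).trans hlamuniv.le
  set ρ1 : Measure ℝ := lam - μ.fst with hρ1def
  set ρ2 : Measure ℝ := lam - μ.snd with hρ2def
  haveI : IsFiniteMeasure μ.fst := Measure.fst.instIsFiniteMeasure
  haveI : IsFiniteMeasure μ.snd := Measure.snd.instIsFiniteMeasure
  have hρ1app : ∀ A : Set ℝ, MeasurableSet A → ρ1 A = lam A - μ.fst A := fun A hA => by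
    rw [hρ1def]; exact Measure.sub_apply hA hfst
  have hρ2app : ∀ A : Set ℝ, MeasurableSet A → ρ2 A = lam A - μ.snd A := fun A hA => by
    rw [hρ2def]; exact Measure.sub_apply hA hsnd
  have hρ1univ : ρ1 Set.univ = 1 - t := by
    rw [hρ1app _ MeasurableSet.univ, hlamuniv, htfst]
  have hρ2univ : ρ2 Set.univ = 1 - t := by
    rw [hρ2app _ MeasurableSet.univ, hlamuniv, htsnd]
  rcases eq_or_lt_of_le ht1 with hteq | htlt
  · -- t = 1
    have h10 : ρ1 Set.univ = 0 := by rw [hρ1univ, ← hteq, tsub_self]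
    have h20 : ρ2 Set.univ = 0 := by rw [hρ2univ, ← hteq, tsub_self]
    have hρ10 : ρ1 = 0 := Measure.measure_univ_eq_zero.1 h10
    have hρ20 : ρ2 = 0 := Measure.measure_univ_eq_zero.1 h20
    have hfst_eq : μ.fst = lam := by
      have h2 : ρ1 + μ.fst = lam := by
        rw [hρ1def]; exact Measure.sub_add_cancel_of_le hfst
      rw [hρ10, zero_add] at h2
      exact h2
    have hsnd_eq : μ.snd = lam := by
      have h2 : ρ2 + μ.snd = lam := by
        rw [hρ2def]; exact Measure.sub_add_cancel_of_le hsnd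
      rw [hρ20, zero_add] at h2
      exact h2
    haveI : IsProbabilityMeasure μ := ⟨by rw [← htdef]; exact hteq⟩
    have h0 := hnull μ ‹IsProbabilityMeasure μ› hfst_eq hsnd_eq
    rw [h0] at hμK
    exact hε0 (le_antisymm hμK (zero_le))
  · -- t < 1
    have h1t0 : (1:ℝ≥0∞) - t ≠ 0 := by
      rw [ne_eq, tsub_eq_zero_iff_le]
      exact not_le.2 htlt
    have h1ttop : (1:ℝ≥0∞) - t ≠ ∞ := (lt_of_le_of_lt tsub_le_self one_lt_top).ne
    set c : ℝ≥0∞ := ((1:ℝ≥0∞) - t)⁻¹ with hc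
    haveI : IsFiniteMeasure ρ1 := by rw [hρ1def]; infer_instance
    haveI : IsFiniteMeasure ρ2 := by rw [hρ2def]; infer_instance
    set π : Measure (ℝ × ℝ) := μ + c • (ρ1.prod ρ2) with hπdef
    have hπuniv : π Set.univ = 1 := by
      have hprodval : (ρ1.prod ρ2) Set.univ = (1-t) * (1-t) := by
        rw [← Set.univ_prod_univ, Measure.prod_prod, hρ1univ, hρ2univ]
      have hcancel : c * ((1 - t) * (1 - t)) = 1 - t := by
        rw [← mul_assoc, hc, ENNReal.inv_mul_cancel h1t0 h1ttop, one_mul]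
      rw [hπdef, Measure.add_apply, Measure.smul_apply, smul_eq_mul, hprodval, hcancel,
        ← htdef]
      exact add_tsub_cancel_of_le ht1
    haveI hπprob : IsProbabilityMeasure π := ⟨hπuniv⟩
    have hπfst : π.fst = lam := by
      refine Measure.ext fun A hA => ?_
      rw [Measure.fst_apply hA, hπdef, Measure.add_apply, Measure.smul_apply, smul_eq_mul]
      have hpre : Prod.fst ⁻¹' A = A ×ˢ (Set.univ : Set ℝ) := (Set.prod_univ).symm
      rw [hpre, Measure.prod_prod, hρ2univ]
      have hterm : c * (ρ1 A * (1 - t)) = ρ1 A := by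
        rw [mul_comm (ρ1 A), ← mul_assoc, hc, ENNReal.inv_mul_cancel h1t0 h1ttop, one_mul]
      rw [hterm, ← hpre, ← Measure.fst_apply hA, hρ1app A hA]
      exact add_tsub_cancel_of_le (Measure.le_iff'.1 hfst A)
    have hπsnd : π.snd = lam := by
      refine Measure.ext fun B hB => ?_
      rw [Measure.snd_apply hB, hπdef, Measure.add_apply, Measure.smul_apply, smul_eq_mul]
      have hpre : Prod.snd ⁻¹' B = (Set.univ : Set ℝ) ×ˢ B := (Set.univ_prod).symm
      rw [hpre, Measure.prod_prod, hρ1univ]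
      have hterm : c * ((1 - t) * ρ2 B) = ρ2 B := by
        rw [← mul_assoc, hc, ENNReal.inv_mul_cancel h1t0 h1ttop, one_mul]
      rw [hterm, ← hpre, ← Measure.snd_apply hB, hρ2app B hB]
      exact add_tsub_cancel_of_le (Measure.le_iff'.1 hsnd B)
    have h0 := hnull π hπprob hπfst hπsnd
    have hle : ε ≤ π K := by
      refine hμK.trans ?_
      rw [hπdef, Measure.add_apply]
      exact le_add_right le_rfl
    rw [h0] at hle
    exact hε0 (le_antisymm hle (zero_le))
end

section
/- Combinatorial selection step: let K ⊆ [0,1]² satisfy K ⊄ (A × [0,1]) ∪ ([0,1] × B) whenever λ(A) + λ(B) < α, for some α > 0. Then for every n with 2k/n < α (where k ≥ 1, k/n ∈ [α/3, α/2]), there exist distinct indices i₁,…,i_k ∈ {0,…,n−1} and distinct indices j₁,…,j_k ∈ {0,…,n−1} such that for each l, the square [i_l/n, (i_l+1)/n] × [j_l/n, (j_l+1)/n] intersects K. -/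
open MeasureTheory ENNReal

lemma cell_exists (n : ℕ) (hn : 0 < n) (x : ℝ) (hx : x ∈ Set.Icc (0 : ℝ) 1) :
    ∃ i : Fin n, x ∈ Set.Icc ((i : ℝ) / n) (((i : ℕ) + 1 : ℝ) / n) := by
  obtain ⟨hx0, hx1⟩ := hx
  have hn' : (0 : ℝ) < n := by exact_mod_cast hn
  rcases lt_or_eq_of_le hx1 with h | h
  · have hnx : (0 : ℝ) ≤ (n : ℝ) * x := by positivity
    have hin : ⌊(n : ℝ) * x⌋₊ < n := (Nat.floor_lt hnx).mpr (by push_cast; nlinarith)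
    refine ⟨⟨⌊(n : ℝ) * x⌋₊, hin⟩, ?_, ?_⟩
    · simp only [Fin.val_mk]
      rw [div_le_iff₀ hn']
      have := Nat.floor_le hnx
      linarith
    · simp only [Fin.val_mk]
      rw [le_div_iff₀ hn']
      have := Nat.lt_succ_floor ((n : ℝ) * x)
      push_cast at this
      linarith
  · subst h
    refine ⟨⟨n - 1, Nat.sub_lt hn one_pos⟩, ?_, ?_⟩
    · simp only [Fin.val_mk]
      rw [div_le_iff₀ hn', one_mul]
      exact_mod_cast Nat.sub_le n 1
    · simp only [Fin.val_mk]
      rw [le_div_iff₀ hn', one_mul]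
      have h1 : ((n - 1 : ℕ) : ℝ) + 1 = n := by
        have := Nat.succ_pred_eq_of_pos hn
        exact_mod_cast this
      linarith

lemma snoc_inj {m : ℕ} {β : Type*} {f : Fin m → β} (hf : Function.Injective f)
    {b : β} (hb : ∀ a, f a ≠ b) :
    Function.Injective (Fin.snoc f b : Fin (m + 1) → β) := by
  intro x y hxy
  rcases Fin.eq_castSucc_or_eq_last x with ⟨x', rfl⟩ | rfl <;>
    rcases Fin.eq_castSucc_or_eq_last y with ⟨y', rfl⟩ | rfl
  · simp only [Fin.snoc_castSucc] at hxy
    exact congrArg _ (hf hxy)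
  · simp only [Fin.snoc_castSucc, Fin.snoc_last] at hxy
    exact absurd hxy (hb x')
  · simp only [Fin.snoc_castSucc, Fin.snoc_last] at hxy
    exact absurd hxy.symm (hb y')
  · rfl

theorem stmt15
    (K : Set (ℝ × ℝ)) (hKsub : K ⊆ Set.Icc (0 : ℝ) 1 ×ˢ Set.Icc (0 : ℝ) 1)
    (α : ℝ) (hα : 0 < α)
    (hm : ∀ (A B : Set ℝ), MeasurableSet A → MeasurableSet B →
      volume.restrict (Set.Icc (0 : ℝ) 1) A + volume.restrict (Set.Icc (0 : ℝ) 1) B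
        < ENNReal.ofReal α →
      ¬ K ⊆ (A ×ˢ Set.univ) ∪ (Set.univ ×ˢ B))
    (n k : ℕ) (hk : 1 ≤ k)
    (h13 : α / 3 ≤ (k : ℝ) / n) (h12 : (k : ℝ) / n ≤ α / 2)
    (h2k : 2 * (k : ℝ) / n < α) :
    ∃ i j : Fin k → Fin n, Function.Injective i ∧ Function.Injective j ∧
      ∀ l : Fin k,
        ((Set.Icc ((i l : ℝ) / n) (((i l : ℕ) + 1 : ℝ) / n) ×ˢ
          Set.Icc ((j l : ℝ) / n) (((j l : ℕ) + 1 : ℝ) / n)) ∩ K).Nonempty := by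
  have hn : 0 < n := by
    by_contra hn
    push_neg at hn
    interval_cases n
    simp at h13
    nlinarith
  have hn' : (0 : ℝ) < n := by exact_mod_cast hn
  -- greedy step
  have step : ∀ (I J : Finset (Fin n)), I.card ≤ k → J.card ≤ k →
      ∃ (i j : Fin n), i ∉ I ∧ j ∉ J ∧
        ((Set.Icc ((i : ℝ) / n) (((i : ℕ) + 1 : ℝ) / n) ×ˢ
          Set.Icc ((j : ℝ) / n) (((j : ℕ) + 1 : ℝ) / n)) ∩ K).Nonempty := by
    intro I J hI hJ
    set A : Set ℝ := ⋃ i ∈ I, Set.Icc ((i : ℝ) / n) (((i : ℕ) + 1 : ℝ) / n) with hA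
    set B : Set ℝ := ⋃ j ∈ J, Set.Icc ((j : ℝ) / n) (((j : ℕ) + 1 : ℝ) / n) with hB
    have hAm : MeasurableSet A := I.measurableSet_biUnion (fun _ _ => measurableSet_Icc)
    have hBm : MeasurableSet B := J.measurableSet_biUnion (fun _ _ => measurableSet_Icc)
    have hcell : ∀ i : Fin n,
        volume (Set.Icc ((i : ℝ) / n) (((i : ℕ) + 1 : ℝ) / n)) = ENNReal.ofReal (1 / n) := by
      intro i
      rw [Real.volume_Icc]
      congr 1
      field_simp
      ring
    have hbound : ∀ (S : Finset (Fin n)), S.card ≤ k →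
        volume (⋃ i ∈ S, Set.Icc ((i : ℝ) / n) (((i : ℕ) + 1 : ℝ) / n))
          ≤ ENNReal.ofReal ((k : ℝ) / n) := by
      intro S hS
      calc volume (⋃ i ∈ S, Set.Icc ((i : ℝ) / n) (((i : ℕ) + 1 : ℝ) / n))
          ≤ ∑ i ∈ S, volume (Set.Icc ((i : ℝ) / n) (((i : ℕ) + 1 : ℝ) / n)) :=
            measure_biUnion_finset_le S _
        _ = S.card • ENNReal.ofReal (1 / n) := by
            rw [Finset.sum_congr rfl (fun i _ => hcell i), Finset.sum_const]
        _ ≤ k • ENNReal.ofReal (1 / n) := by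
            exact nsmul_le_nsmul_left (by positivity) hS |>.trans_eq rfl
        _ = ENNReal.ofReal ((k : ℝ) / n) := by
            rw [nsmul_eq_mul, ← ENNReal.ofReal_natCast k, ← ENNReal.ofReal_mul (by positivity)]
            congr 1
            field_simp
    have hmeas : volume.restrict (Set.Icc (0 : ℝ) 1) A
        + volume.restrict (Set.Icc (0 : ℝ) 1) B < ENNReal.ofReal α := by
      have hA' : volume.restrict (Set.Icc (0 : ℝ) 1) A ≤ ENNReal.ofReal ((k : ℝ) / n) := by
        rw [Measure.restrict_apply hAm]
        exact (measure_mono Set.inter_subset_left).trans (hbound I hI)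
      have hB' : volume.restrict (Set.Icc (0 : ℝ) 1) B ≤ ENNReal.ofReal ((k : ℝ) / n) := by
        rw [Measure.restrict_apply hBm]
        exact (measure_mono Set.inter_subset_left).trans (hbound J hJ)
      calc volume.restrict (Set.Icc (0 : ℝ) 1) A + volume.restrict (Set.Icc (0 : ℝ) 1) B
          ≤ ENNReal.ofReal ((k : ℝ) / n) + ENNReal.ofReal ((k : ℝ) / n) := add_le_add hA' hB'
        _ = ENNReal.ofReal (2 * (k : ℝ) / n) := by
            rw [← ENNReal.ofReal_add (by positivity) (by positivity)]
            congr 1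
            ring
        _ < ENNReal.ofReal α := (ENNReal.ofReal_lt_ofReal_iff hα).mpr h2k
    have hnotsub := hm A B hAm hBm hmeas
    rw [Set.not_subset] at hnotsub
    obtain ⟨p, hpK, hpnot⟩ := hnotsub
    simp only [Set.mem_union, Set.mem_prod, Set.mem_univ, and_true, true_and, not_or] at hpnot
    obtain ⟨hp1, hp2⟩ := hpnot
    obtain ⟨hp1', hp2'⟩ := hKsub hpK
    obtain ⟨i, hi⟩ := cell_exists n hn p.1 hp1'
    obtain ⟨j, hj⟩ := cell_exists n hn p.2 hp2'
    refine ⟨i, j, ?_, ?_, p, ⟨⟨hi, hj⟩, hpK⟩⟩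
    · intro hmem
      exact hp1 (Set.mem_biUnion hmem hi)
    · intro hmem
      exact hp2 (Set.mem_biUnion hmem hj)
  -- induction
  have main : ∀ m : ℕ, m ≤ k → ∃ i j : Fin m → Fin n,
      Function.Injective i ∧ Function.Injective j ∧
      ∀ l : Fin m,
        ((Set.Icc ((i l : ℝ) / n) (((i l : ℕ) + 1 : ℝ) / n) ×ˢ
          Set.Icc ((j l : ℝ) / n) (((j l : ℕ) + 1 : ℝ) / n)) ∩ K).Nonempty := by
    intro m
    induction m with
    | zero =>
      intro _
      exact ⟨Fin.elim0, Fin.elim0, Function.injective_of_subsingleton _,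
        Function.injective_of_subsingleton _, fun l => l.elim0⟩
    | succ m ih =>
      intro hm1
      obtain ⟨i, j, hi, hj, hprop⟩ := ih (Nat.le_of_succ_le hm1)
      have hcardI : (Finset.univ.image i).card ≤ k :=
        (Finset.card_image_le).trans (by simpa using Nat.le_of_succ_le hm1)
      have hcardJ : (Finset.univ.image j).card ≤ k :=
        (Finset.card_image_le).trans (by simpa using Nat.le_of_succ_le hm1)
      obtain ⟨i', j', hi', hj', hne⟩ := step _ _ hcardI hcardJ
      refine ⟨Fin.snoc i i', Fin.snoc j j', ?_, ?_, ?_⟩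
      · exact snoc_inj hi (fun a ha => hi' (Finset.mem_image.mpr ⟨a, Finset.mem_univ a, ha⟩))
      · exact snoc_inj hj (fun a ha => hj' (Finset.mem_image.mpr ⟨a, Finset.mem_univ a, ha⟩))
      · intro l
        rcases Fin.eq_castSucc_or_eq_last l with ⟨l', rfl⟩ | rfl
        · simpa [Fin.snoc_castSucc] using hprop l'
        · simpa [Fin.snoc_last] using hne
  exact main k le_rfl
end

section
/- Comparison of m and γ: for any set L ⊆ [0,1]², define m(L) = inf{λ(A)+λ(B) : L ⊆ (A×[0,1]) ∪ ([0,1]×B)} and γ(L) = inf{∫ f dλ : f : [0,1] → [0,1], f(x)+f(y) ≥ 1_L(x,y) for all (x,y)}. Then γ(L) ≤ m(L) ≤ 4γ(L). -/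
open MeasureTheory ENNReal

theorem stmt16 (L : Set (ℝ × ℝ))
    (hLsub : L ⊆ Set.Icc (0 : ℝ) 1 ×ˢ Set.Icc (0 : ℝ) 1) :
    sInf {r : ℝ≥0∞ | ∃ f : ℝ → ℝ, Measurable f ∧ (∀ x, f x ∈ Set.Icc (0 : ℝ) 1) ∧
        (∀ x y, (x, y) ∈ L → 1 ≤ f x + f y) ∧
        r = ENNReal.ofReal (∫ x in Set.Icc (0 : ℝ) 1, f x)}
      ≤ sInf {r : ℝ≥0∞ | ∃ (A B : Set ℝ), MeasurableSet A ∧ MeasurableSet B ∧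
          L ⊆ (A ×ˢ Set.univ) ∪ (Set.univ ×ˢ B) ∧
          r = volume.restrict (Set.Icc (0 : ℝ) 1) A + volume.restrict (Set.Icc (0 : ℝ) 1) B} ∧
    sInf {r : ℝ≥0∞ | ∃ (A B : Set ℝ), MeasurableSet A ∧ MeasurableSet B ∧
        L ⊆ (A ×ˢ Set.univ) ∪ (Set.univ ×ˢ B) ∧
        r = volume.restrict (Set.Icc (0 : ℝ) 1) A + volume.restrict (Set.Icc (0 : ℝ) 1) B}
      ≤ 4 * sInf {r : ℝ≥0∞ | ∃ f : ℝ → ℝ, Measurable f ∧ (∀ x, f x ∈ Set.Icc (0 : ℝ) 1) ∧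
          (∀ x y, (x, y) ∈ L → 1 ≤ f x + f y) ∧
          r = ENNReal.ofReal (∫ x in Set.Icc (0 : ℝ) 1, f x)} := by
  set G := {r : ℝ≥0∞ | ∃ f : ℝ → ℝ, Measurable f ∧ (∀ x, f x ∈ Set.Icc (0 : ℝ) 1) ∧
        (∀ x y, (x, y) ∈ L → 1 ≤ f x + f y) ∧
        r = ENNReal.ofReal (∫ x in Set.Icc (0 : ℝ) 1, f x)} with hG
  set M := {r : ℝ≥0∞ | ∃ (A B : Set ℝ), MeasurableSet A ∧ MeasurableSet B ∧
          L ⊆ (A ×ˢ Set.univ) ∪ (Set.univ ×ˢ B) ∧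
          r = volume.restrict (Set.Icc (0 : ℝ) 1) A + volume.restrict (Set.Icc (0 : ℝ) 1) B}
    with hM
  constructor
  · -- γ ≤ m
    refine le_sInf ?_
    rintro r ⟨A, B, hA, hB, hcov, rfl⟩
    set f : ℝ → ℝ := (A ∪ B).indicator (fun _ => (1 : ℝ)) with hf
    have hfmem : ENNReal.ofReal (∫ x in Set.Icc (0 : ℝ) 1, f x) ∈ G := by
      refine ⟨f, (measurable_const.indicator (hA.union hB)), ?_, ?_, rfl⟩
      · intro x
        by_cases hx : x ∈ A ∪ B <;> simp [hf, Set.indicator, hx]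
      · intro x y hxy
        have hy0 : 0 ≤ f y := by by_cases hy : y ∈ A ∪ B <;> simp [hf, Set.indicator, hy]
        have hx0 : 0 ≤ f x := by by_cases hx : x ∈ A ∪ B <;> simp [hf, Set.indicator, hx]
        rcases hcov hxy with h | h
        · have hx1 : f x = 1 :=
            Set.indicator_of_mem (show x ∈ A ∪ B from Or.inl h.1) (fun _ => (1 : ℝ))
          linarith
        · have hy1 : f y = 1 :=
            Set.indicator_of_mem (show y ∈ A ∪ B from Or.inr h.2) (fun _ => (1 : ℝ))
          linarith
    refine le_trans (sInf_le hfmem) ?_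
    have hint : (∫ x in Set.Icc (0 : ℝ) 1, f x)
        = (volume.restrict (Set.Icc (0 : ℝ) 1) (A ∪ B)).toReal := by
      rw [hf, integral_indicator_const (1 : ℝ) (hA.union hB)]
      simp
      rfl
    have hne : volume.restrict (Set.Icc (0 : ℝ) 1) (A ∪ B) ≠ ⊤ := by
      refine ne_top_of_le_ne_top ?_ (measure_mono (Set.subset_univ _))
      simp [Measure.restrict_apply_univ]
    rw [hint, ENNReal.ofReal_toReal hne]
    exact measure_union_le A B
  · -- m ≤ 4γ
    rcases Set.eq_empty_or_nonempty G with hGe | hGne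
    · rw [hGe, sInf_empty, ENNReal.mul_top (by norm_num)]
      exact le_top
    · have key : ∀ r ∈ G, sInf M ≤ 4 * r := by
        rintro r ⟨f, hfm, hf01, hfcov, rfl⟩
        set A : Set ℝ := {x | (1 : ℝ)/2 ≤ f x} with hA
        have hAm : MeasurableSet A := measurableSet_le measurable_const hfm
        have hmemM : (volume.restrict (Set.Icc (0 : ℝ) 1) A
            + volume.restrict (Set.Icc (0 : ℝ) 1) A) ∈ M := by
          refine ⟨A, A, hAm, hAm, ?_, rfl⟩
          rintro ⟨x, y⟩ hxy
          have h := hfcov x y hxy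
          by_cases hx : (1 : ℝ)/2 ≤ f x
          · exact Or.inl ⟨hx, Set.mem_univ _⟩
          · refine Or.inr ⟨Set.mem_univ _, ?_⟩
            show (1 : ℝ)/2 ≤ f y
            linarith
        refine le_trans (sInf_le hmemM) ?_
        -- Markov bound
        set μ := volume.restrict (Set.Icc (0 : ℝ) 1) with hμ
        have hμfin : μ Set.univ ≠ ⊤ := by simp [hμ, Measure.restrict_apply_univ]
        have hint : Integrable f μ := by
          refine Integrable.mono' (integrable_const 1) hfm.aestronglyMeasurable ?_
          refine Filter.Eventually.of_forall fun x => ?_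
          have := hf01 x
          rw [Real.norm_eq_abs, abs_le]
          constructor <;> linarith [this.1, this.2]
        have hpos : 0 ≤ᶠ[ae μ] f := Filter.Eventually.of_forall fun x => (hf01 x).1
        have heq : ENNReal.ofReal (∫ x, f x ∂μ) = ∫⁻ x, ENNReal.ofReal (f x) ∂μ :=
          ofReal_integral_eq_lintegral_ofReal hint hpos
        have hmark : ENNReal.ofReal (1/2) * μ {x | ENNReal.ofReal (1/2) ≤ ENNReal.ofReal (f x)}
            ≤ ∫⁻ x, ENNReal.ofReal (f x) ∂μ :=
          mul_meas_ge_le_lintegral₀ (measurable_ofReal.comp hfm).aemeasurable _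
        have hsetEq : {x | ENNReal.ofReal (1/2) ≤ ENNReal.ofReal (f x)} = A := by
          ext x
          simp only [Set.mem_setOf_eq, hA]
          rw [ENNReal.ofReal_le_ofReal_iff (hf01 x).1]
        rw [hsetEq] at hmark
        have h2 : μ A ≤ 2 * ENNReal.ofReal (∫ x, f x ∂μ) := by
          rw [heq]
          have h12 : ENNReal.ofReal (1/2) = 2⁻¹ := by
            rw [show (1:ℝ)/2 = (2:ℝ)⁻¹ by norm_num,
              ENNReal.ofReal_inv_of_pos (by norm_num : (0:ℝ) < 2)]
            norm_num
          calc μ A = 2 * (ENNReal.ofReal (1/2) * μ A) := by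
                rw [h12, ← mul_assoc, ENNReal.mul_inv_cancel two_ne_zero ENNReal.ofNat_ne_top,
                  one_mul]
            _ ≤ 2 * ∫⁻ x, ENNReal.ofReal (f x) ∂μ := by
                exact mul_le_mul_right hmark 2
        calc μ A + μ A = 2 * μ A := by ring
          _ ≤ 2 * (2 * ENNReal.ofReal (∫ x, f x ∂μ)) := mul_le_mul_right h2 2
          _ = 4 * ENNReal.ofReal (∫ x, f x ∂μ) := by ring
      haveI : Nonempty G := hGne.to_subtype
      have : (4 : ℝ≥0∞) * sInf G = ⨅ r : G, 4 * (r : ℝ≥0∞) := by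
        rw [sInf_eq_iInf']
        exact ENNReal.mul_iInf (ι := G) (f := fun r => (r : ℝ≥0∞))
          (by intro h; exact absurd h (by norm_num))
      rw [this]
      exact le_iInf fun ⟨r, hr⟩ => key r hr
end

section
/- Continuity from below of γ: the set function γ(L) := inf{∫ f dλ : f : [0,1] → [0,1] measurable, f(x)+f(y) ≥ 1_L(x,y) for all (x,y) ∈ [0,1]²} satisfies: for every increasing sequence of sets A₁ ⊆ A₂ ⊆ ⋯ ⊆ [0,1]² with union A, one has sup_n γ(A_n) = γ(A). -/
open MeasureTheory ENNReal Filter Topology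

namespace Stmt17Aux

noncomputable def mu : Measure ℝ := volume.restrict (Set.Icc 0 1)

instance : IsProbabilityMeasure mu :=
  ⟨by simp [mu, Real.volume_Icc]⟩

variable (f : ℕ → ℝ → ℝ)

noncomputable def g (N : ℕ) (w : ℕ → ℝ) : ℝ → ℝ := fun x => ∑ k ∈ Finset.range N, w k * f k x

def IsCombo (m : ℕ) (u : ℝ → ℝ) : Prop :=
  ∃ N w, (∀ k, 0 ≤ w k) ∧ (∀ k, k < m → w k = 0) ∧ (∀ k, N ≤ k → w k = 0) ∧
    (∑ k ∈ Finset.range N, w k) = 1 ∧ u = g f N w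

lemma combo_self (m : ℕ) : IsCombo f m (f m) := by
  refine ⟨m + 1, fun k => if k = m then 1 else 0, ?_, ?_, ?_, ?_, ?_⟩
  · intro k; by_cases h : k = m <;> simp [h]
  · intro k hk; simp [Nat.ne_of_lt hk]
  · intro k hk; have : k ≠ m := by omega
    simp [this]
  · simp
  · funext x
    simp [g, Finset.sum_ite_eq' (Finset.range (m + 1)) m (fun k => f k x)]

lemma combo_mono {m l : ℕ} (h : m ≤ l) {u : ℝ → ℝ} (hu : IsCombo f l u) : IsCombo f m u := by
  obtain ⟨N, w, h1, h2, h3, h4, h5⟩ := hu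
  exact ⟨N, w, h1, fun k hk => h2 k (lt_of_lt_of_le hk h), h3, h4, h5⟩

variable (hmem : ∀ n x, f n x ∈ Set.Icc (0:ℝ) 1) (hmeas : ∀ n, Measurable (f n))

include hmem in
lemma combo_mem {m : ℕ} {u : ℝ → ℝ} (hu : IsCombo f m u) (x : ℝ) : u x ∈ Set.Icc (0:ℝ) 1 := by
  obtain ⟨N, w, h1, h2, h3, h4, h5⟩ := hu
  subst h5
  constructor
  · exact Finset.sum_nonneg fun k _ => mul_nonneg (h1 k) (hmem k x).1
  · calc ∑ k ∈ Finset.range N, w k * f k x ≤ ∑ k ∈ Finset.range N, w k * 1 :=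
        Finset.sum_le_sum fun k _ => mul_le_mul_of_nonneg_left (hmem k x).2 (h1 k)
    _ = 1 := by simpa using h4

include hmeas in
lemma combo_measurable {m : ℕ} {u : ℝ → ℝ} (hu : IsCombo f m u) : Measurable u := by
  obtain ⟨N, w, h1, h2, h3, h4, h5⟩ := hu
  subst h5
  exact Finset.measurable_sum _ fun k _ => (hmeas k).const_mul (w k)

include hmem hmeas in
lemma combo_memL2 {m : ℕ} {u : ℝ → ℝ} (hu : IsCombo f m u) : MemLp u 2 mu := by
  refine MemLp.of_bound ((combo_measurable f hmeas hu).aestronglyMeasurable) 1 ?_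
  refine Eventually.of_forall fun x => ?_
  have := combo_mem f hmem hu x
  rw [Real.norm_eq_abs, abs_le]
  constructor <;> [linarith [this.1]; exact this.2]

include hmem hmeas in
lemma combo_integrable {m : ℕ} {u : ℝ → ℝ} (hu : IsCombo f m u) : Integrable u mu :=
  (combo_memL2 f hmem hmeas hu).integrable (by norm_num)

include hmem hmeas in
lemma combo_integral {m : ℕ} {u : ℝ → ℝ} (hu : IsCombo f m u) {c : ℝ}
    (hint : ∀ n, (∫ x, f n x ∂mu) ≤ c) : (∫ x, u x ∂mu) ≤ c := by
  obtain ⟨N, w, h1, h2, h3, h4, h5⟩ := hu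
  subst h5
  have hInt : ∀ k, Integrable (fun x => w k * f k x) mu := fun k =>
    ((combo_integrable f hmem hmeas (combo_self f k))).const_mul (w k)
  simp only [g]
  rw [integral_finset_sum _ fun k _ => hInt k]
  calc ∑ k ∈ Finset.range N, ∫ x, w k * f k x ∂mu
      = ∑ k ∈ Finset.range N, w k * ∫ x, f k x ∂mu := by
        refine Finset.sum_congr rfl fun k _ => ?_
        exact integral_const_mul (w k) (f k)
    _ ≤ ∑ k ∈ Finset.range N, w k * c := by
        refine Finset.sum_le_sum fun k _ => mul_le_mul_of_nonneg_left (hint k) (h1 k)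
    _ = c := by rw [← Finset.sum_mul, h4, one_mul]

lemma combo_feas {m : ℕ} {u : ℝ → ℝ} (hu : IsCombo f m u) {x y : ℝ} {p : ℕ}
    (hp : ∀ k, p ≤ k → 1 ≤ f k x + f k y) (hmp : p ≤ m) : 1 ≤ u x + u y := by
  obtain ⟨N, w, h1, h2, h3, h4, h5⟩ := hu
  subst h5
  have h5 : (1:ℝ) = ∑ k ∈ Finset.range N, w k * 1 := by simpa using h4.symm
  simp only [g]
  rw [← Finset.sum_add_distrib, h5]
  refine Finset.sum_le_sum fun k _ => ?_
  rcases eq_or_ne (w k) 0 with h | h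
  · simp [h]
  · have hk : m ≤ k := by by_contra hc; exact h (h2 k (by omega))
    have := hp k (le_trans hmp hk)
    calc w k * 1 ≤ w k * (f k x + f k y) := mul_le_mul_of_nonneg_left this (h1 k)
      _ = w k * f k x + w k * f k y := by ring

lemma combo_midpoint {M : ℕ} {u v : ℝ → ℝ} (hu : IsCombo f M u) (hv : IsCombo f M v) :
    IsCombo f M (fun x => 2⁻¹ * u x + 2⁻¹ * v x) := by
  obtain ⟨N1, w1, a1, a2, a3, a4, a5⟩ := hu
  obtain ⟨N2, w2, b1, b2, b3, b4, b5⟩ := hv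
  subst a5; subst b5
  refine ⟨max N1 N2, fun k => 2⁻¹ * w1 k + 2⁻¹ * w2 k, ?_, ?_, ?_, ?_, ?_⟩
  · intro k
    have := a1 k; have := b1 k
    show 0 ≤ 2⁻¹ * w1 k + 2⁻¹ * w2 k
    positivity
  · intro k hk; simp [a2 k hk, b2 k hk]
  · intro k hk
    simp [a3 k (le_trans (le_max_left _ _) hk), b3 k (le_trans (le_max_right _ _) hk)]
  · have e1 : ∑ k ∈ Finset.range (max N1 N2), w1 k = 1 := by
      rw [← a4]
      exact (Finset.sum_subset (Finset.range_subset_range.2 (le_max_left _ _))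
        (fun k _ hk => a3 k (by simpa using hk))).symm
    have e2 : ∑ k ∈ Finset.range (max N1 N2), w2 k = 1 := by
      rw [← b4]
      exact (Finset.sum_subset (Finset.range_subset_range.2 (le_max_right _ _))
        (fun k _ hk => b3 k (by simpa using hk))).symm
    rw [Finset.sum_add_distrib, ← Finset.mul_sum, ← Finset.mul_sum, e1, e2]
    norm_num
  · funext x
    have e1 : ∑ k ∈ Finset.range (max N1 N2), w1 k * f k x
        = ∑ k ∈ Finset.range N1, w1 k * f k x :=
      (Finset.sum_subset (Finset.range_subset_range.2 (le_max_left _ _))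
        (fun k _ hk => by rw [a3 k (by simpa using hk), zero_mul])).symm
    have e2 : ∑ k ∈ Finset.range (max N1 N2), w2 k * f k x
        = ∑ k ∈ Finset.range N2, w2 k * f k x :=
      (Finset.sum_subset (Finset.range_subset_range.2 (le_max_right _ _))
        (fun k _ hk => by rw [b3 k (by simpa using hk), zero_mul])).symm
    simp only [g]
    rw [← e1, ← e2, Finset.mul_sum, Finset.mul_sum, ← Finset.sum_add_distrib]
    refine Finset.sum_congr rfl fun k _ => by ring

noncomputable def nn (u : ℝ → ℝ) : ℝ := (eLpNorm u 2 mu).toReal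

def DSet (m : ℕ) : Set ℝ := {r | ∃ u, IsCombo f m u ∧ r = nn u}

noncomputable def d (m : ℕ) : ℝ := sInf (DSet f m)

lemma nn_nonneg (u : ℝ → ℝ) : 0 ≤ nn u := ENNReal.toReal_nonneg

include hmem in
lemma nn_le_one {m : ℕ} {u : ℝ → ℝ} (hu : IsCombo f m u) : nn u ≤ 1 := by
  have h : eLpNorm u 2 mu ≤ 1 := by
    have := eLpNorm_le_of_ae_bound (μ := mu) (p := 2) (f := u) (C := 1)
      (Eventually.of_forall fun x => by
        have := combo_mem f hmem hu x
        rw [Real.norm_eq_abs, abs_le]; constructor <;> [linarith [this.1]; exact this.2])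
    simpa using this
  calc nn u ≤ (1 : ℝ≥0∞).toReal := ENNReal.toReal_mono (by norm_num) h
    _ = 1 := by simp

lemma DSet_nonempty (m : ℕ) : (DSet f m).Nonempty := ⟨nn (f m), f m, combo_self f m, rfl⟩

lemma DSet_bddBelow (m : ℕ) : BddBelow (DSet f m) :=
  ⟨0, fun r ⟨u, _, hr⟩ => hr ▸ nn_nonneg u⟩

lemma d_nonneg (m : ℕ) : 0 ≤ d f m :=
  le_csInf (DSet_nonempty f m) fun r ⟨u, _, hr⟩ => hr ▸ nn_nonneg u

include hmem in
lemma d_le_one (m : ℕ) : d f m ≤ 1 :=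
  csInf_le_of_le (DSet_bddBelow f m) ⟨f m, combo_self f m, rfl⟩ (nn_le_one f hmem (combo_self f m))

lemma d_mono : Monotone (d f) := by
  intro m l hml
  refine csInf_le_csInf (DSet_bddBelow f m) (DSet_nonempty f l) ?_
  rintro r ⟨u, hu, hr⟩
  exact ⟨u, combo_mono f hml hu, hr⟩

include hmem in
lemma d_le_dd (m : ℕ) : d f m ≤ ⨆ k, d f k :=
  le_ciSup ⟨1, fun r ⟨k, hk⟩ => hk ▸ d_le_one f hmem k⟩ m

lemma d_le_nn {m : ℕ} {u : ℝ → ℝ} (hu : IsCombo f m u) : d f m ≤ nn u :=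
  csInf_le (DSet_bddBelow f m) ⟨u, hu, rfl⟩

/-- The key compactness lemma: from a uniformly bounded sequence of `[0,1]`-valued measurable
functions with integrals `≤ c`, produce a single function `F` with integral `≤ c` that is a
pointwise "limit of convex combinations of tails". -/
lemma key (hmeas : ∀ n, Measurable (f n)) (hmem : ∀ n x, f n x ∈ Set.Icc (0:ℝ) 1)
    {c : ℝ} (hint : ∀ n, (∫ x, f n x ∂mu) ≤ c) :
    ∃ F : ℝ → ℝ, Measurable F ∧ (∀ x, F x ∈ Set.Icc (0:ℝ) 1) ∧
      (∀ x y : ℝ, (∃ p, ∀ k, p ≤ k → 1 ≤ f k x + f k y) → 1 ≤ F x + F y) ∧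
      (∫ x, F x ∂mu) ≤ c := by
  classical
  set dd : ℝ := ⨆ k, d f k with hdd
  have hdd0 : 0 ≤ dd := le_trans (d_nonneg f 0) (d_le_dd f hmem 0)
  -- choose near-optimal combos
  have hchoice : ∀ m : ℕ, ∃ u, IsCombo f m u ∧ nn u < dd + 1 / (m + 1) := by
    intro m
    have h1 : d f m < dd + 1 / (m + 1) := by
      have := d_le_dd f hmem m
      have : d f m ≤ dd := this
      have hpos : (0:ℝ) < 1 / (m + 1) := by positivity
      linarith
    obtain ⟨r, ⟨u, hu, hr⟩, hlt⟩ := exists_lt_of_csInf_lt (DSet_nonempty f m) h1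
    exact ⟨u, hu, hr ▸ hlt⟩
  set u : ℕ → ℝ → ℝ := fun m => (hchoice m).choose with hu_def
  have hu : ∀ m, IsCombo f m (u m) := fun m => (hchoice m).choose_spec.1
  have hunn : ∀ m, nn (u m) < dd + 1 / (m + 1) := fun m => (hchoice m).choose_spec.2
  have humem : ∀ m x, u m x ∈ Set.Icc (0:ℝ) 1 := fun m => combo_mem f hmem (hu m)
  have humeas : ∀ m, Measurable (u m) := fun m => combo_measurable f hmeas (hu m)
  have huL2 : ∀ m, MemLp (u m) 2 mu := fun m => combo_memL2 f hmem hmeas (hu m)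
  set H : ℕ → Lp ℝ 2 mu := fun m => (huL2 m).toLp (u m) with hH_def
  have hHnorm : ∀ m, ‖H m‖ = nn (u m) := fun m => Lp.norm_toLp _ _
  -- midpoint lower bound
  have hmid : ∀ M m l : ℕ, M ≤ m → M ≤ l → 2 * d f M ≤ ‖H m + H l‖ := by
    intro M m l hm hl
    have hcombo : IsCombo f M (fun x => 2⁻¹ * u m x + 2⁻¹ * u l x) :=
      combo_midpoint f (combo_mono f hm (hu m)) (combo_mono f hl (hu l))
    have h1 : d f M ≤ nn (fun x => 2⁻¹ * u m x + 2⁻¹ * u l x) := d_le_nn f hcombo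
    have h2 : ‖H m + H l‖ = 2 * nn (fun x => 2⁻¹ * u m x + 2⁻¹ * u l x) := by
      have he : H m + H l = ((huL2 m).add (huL2 l)).toLp (fun x => u m x + u l x) :=
        (MemLp.toLp_add (huL2 m) (huL2 l)).symm
      rw [he, Lp.norm_toLp]
      have hsmul : (fun x => u m x + u l x)
          = (2:ℝ) • (fun x => 2⁻¹ * u m x + 2⁻¹ * u l x) := by
        funext x
        simp only [Pi.smul_apply, smul_eq_mul]
        ring
      rw [hsmul, eLpNorm_const_smul, ENNReal.toReal_mul]
      simp only [nn, ENNReal.coe_toReal, coe_nnnorm, Real.norm_eq_abs]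
      norm_num
    rw [h2]
    linarith
  -- Cauchy sequence
  have hCauchy : CauchySeq H := by
    rw [Metric.cauchySeq_iff]
    intro ε hε
    -- B M := 4*((dd + 1/(M+1))^2 - d f M ^2) tends to 0
    have hdtend : Tendsto (d f) atTop (𝓝 dd) :=
      tendsto_atTop_ciSup (d_mono f) ⟨1, fun r ⟨k, hk⟩ => hk ▸ d_le_one f hmem k⟩
    have hone : Tendsto (fun M : ℕ => 1 / ((M:ℝ) + 1)) atTop (𝓝 0) :=
      tendsto_one_div_add_atTop_nhds_zero_nat
    have hBtend : Tendsto (fun M : ℕ => 4 * ((dd + 1 / ((M:ℝ) + 1))^2 - d f M ^ 2)) atTop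
        (𝓝 0) := by
      have : Tendsto (fun M : ℕ => (dd + 1 / ((M:ℝ) + 1))^2 - d f M ^ 2) atTop
          (𝓝 ((dd + 0)^2 - dd^2)) := ((hone.const_add dd).pow 2).sub (hdtend.pow 2)
      have h0 : ((dd + 0)^2 - dd^2 : ℝ) = 0 := by ring
      rw [h0] at this
      simpa using this.const_mul (4:ℝ)
    have hev : ∀ᶠ M : ℕ in atTop, 4 * ((dd + 1 / ((M:ℝ) + 1))^2 - d f M ^ 2) < ε ^ 2 := by
      refine hBtend.eventually_lt_const ?_
      positivity
    obtain ⟨M, hM⟩ := hev.exists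
    refine ⟨M, fun m hm l hl => ?_⟩
    rw [dist_eq_norm]
    have hnm : ‖H m‖ ≤ dd + 1 / (M + 1) := by
      have h1 := (hunn m).le
      have h2 : 1 / ((m:ℝ) + 1) ≤ 1 / ((M:ℝ) + 1) := by
        apply one_div_le_one_div_of_le (by positivity)
        exact_mod_cast by omega
      rw [hHnorm]; linarith
    have hnl : ‖H l‖ ≤ dd + 1 / (M + 1) := by
      have h1 := (hunn l).le
      have h2 : 1 / ((l:ℝ) + 1) ≤ 1 / ((M:ℝ) + 1) := by
        apply one_div_le_one_div_of_le (by positivity)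
        exact_mod_cast by omega
      rw [hHnorm]; linarith
    have hpar := parallelogram_law_with_norm ℝ (H m) (H l)
    have hmid' := hmid M m l hm hl
    have hdM0 : 0 ≤ d f M := d_nonneg f M
    have hnorm0 : (0:ℝ) ≤ ‖H m - H l‖ := norm_nonneg _
    have hB : ‖H m - H l‖ ^ 2 ≤ 4 * ((dd + 1 / ((M:ℝ) + 1))^2 - d f M ^ 2) := by
      have h4 : (2 * d f M) * (2 * d f M) ≤ ‖H m + H l‖ * ‖H m + H l‖ :=
        mul_self_le_mul_self (by linarith) hmid'
      have hm0 : (0:ℝ) ≤ ‖H m‖ := norm_nonneg _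
      have hl0 : (0:ℝ) ≤ ‖H l‖ := norm_nonneg _
      nlinarith [hpar, hnm, hnl]
    have : ‖H m - H l‖ ^ 2 < ε ^ 2 := lt_of_le_of_lt hB hM
    nlinarith
  obtain ⟨Lim, hLim⟩ := cauchySeq_tendsto_of_complete hCauchy
  -- convergence of eLpNorms
  have heLp : Tendsto (fun m => eLpNorm (u m - ⇑Lim) 2 mu) atTop (𝓝 0) := by
    have hdist : Tendsto (fun m => dist (H m) Lim) atTop (𝓝 0) :=
      tendsto_iff_dist_tendsto_zero.mp hLim
    have heq : ∀ m, eLpNorm (u m - ⇑Lim) 2 mu = ENNReal.ofReal (dist (H m) Lim) := by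
      intro m
      have h1 : (u m - ⇑Lim) =ᵐ[mu] (⇑(H m) - ⇑Lim) := by
        filter_upwards [MemLp.coeFn_toLp (huL2 m)] with x hx
        simp [hH_def, hx]
      rw [eLpNorm_congr_ae h1, ← Lp.edist_def, edist_dist]
    simp only [heq]
    have := ENNReal.tendsto_ofReal (f := atTop) hdist
    simpa using this
  have hinm : TendstoInMeasure mu u atTop ⇑Lim :=
    tendstoInMeasure_of_tendsto_eLpNorm_of_ne_top (p := 2) (by norm_num) (by norm_num)
      (fun m => (humeas m).aestronglyMeasurable) (Lp.aestronglyMeasurable Lim) heLp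
  obtain ⟨ns, hns_mono, hae⟩ := hinm.exists_seq_tendsto_ae
  -- define F as pointwise limsup along the subsequence
  set F : ℝ → ℝ := fun x => limsup (fun i : ℕ => u (ns i) x) atTop with hF_def
  have hFmeas : Measurable F := Measurable.limsup fun i : ℕ => humeas (ns i)
  have hbdd_le : ∀ x, IsBoundedUnder (· ≤ ·) atTop (fun i : ℕ => u (ns i) x) := fun x =>
    isBoundedUnder_of ⟨1, fun i : ℕ => (humem (ns i) x).2⟩
  have hbdd_ge : ∀ x, IsBoundedUnder (· ≥ ·) atTop (fun i : ℕ => u (ns i) x) := fun x =>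
    isBoundedUnder_of ⟨0, fun i : ℕ => (humem (ns i) x).1⟩
  have hFmem : ∀ x, F x ∈ Set.Icc (0:ℝ) 1 := by
    intro x
    constructor
    · exact le_limsup_of_frequently_le
        (Frequently.of_forall fun i : ℕ => (humem (ns i) x).1) (hbdd_le x)
    · exact limsup_le_of_le ((hbdd_ge x).isCoboundedUnder_le)
        (Eventually.of_forall fun i : ℕ => (humem (ns i) x).2)
  have hFfeas : ∀ x y : ℝ, (∃ p, ∀ k, p ≤ k → 1 ≤ f k x + f k y) → 1 ≤ F x + F y := by
    rintro x y ⟨p, hp⟩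
    have hsum : ∀ i, p ≤ i → 1 ≤ u (ns i) x + u (ns i) y := by
      intro i hi
      exact combo_feas f (hu (ns i)) hp (le_trans hi (hns_mono.le_apply))
    have h1 : (1:ℝ) ≤ limsup (fun i : ℕ => u (ns i) x + u (ns i) y) atTop := by
      refine le_limsup_of_frequently_le ?_ ?_
      · exact (eventually_atTop.2 ⟨p, hsum⟩).frequently
      · exact isBoundedUnder_of ⟨2, fun i : ℕ => by
          have h1 := (humem (ns i) x).2
          have h2 := (humem (ns i) y).2
          show u (ns i) x + u (ns i) y ≤ 2
          linarith⟩
    have h2 : limsup (fun i : ℕ => u (ns i) x + u (ns i) y) atTop ≤ F x + F y := by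
      have := limsup_add_le (f := atTop) (u := fun i : ℕ => u (ns i) x) (v := fun i : ℕ => u (ns i) y)
        (hbdd_ge x) (hbdd_le x) ((hbdd_ge y).isCoboundedUnder_le) (hbdd_le y)
      exact le_trans (le_of_eq (by rfl)) this
    linarith
  have haeF : ∀ᵐ x ∂mu, Tendsto (fun i : ℕ => u (ns i) x) atTop (𝓝 (F x)) := by
    filter_upwards [hae] with x hx
    have : F x = ⇑Lim x := hx.limsup_eq
    rw [this]; exact hx
  have hintF : Tendsto (fun i : ℕ => ∫ x, u (ns i) x ∂mu) atTop (𝓝 (∫ x, F x ∂mu)) := by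
    refine tendsto_integral_of_dominated_convergence (fun _ => (1:ℝ))
      (fun i : ℕ => (humeas (ns i)).aestronglyMeasurable) (integrable_const 1)
      (fun i : ℕ => Eventually.of_forall fun x => ?_) haeF
    have := humem (ns i) x
    show ‖u (ns i) x‖ ≤ (1:ℝ)
    rw [Real.norm_eq_abs, abs_le]
    exact ⟨by linarith [this.1], this.2⟩
  refine ⟨F, hFmeas, hFmem, hFfeas, ?_⟩
  refine le_of_tendsto hintF (Eventually.of_forall fun i : ℕ => ?_)
  exact combo_integral f hmem hmeas (hu (ns i)) hint

end Stmt17Aux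

open Stmt17Aux in
theorem stmt17 (A : ℕ → Set (ℝ × ℝ)) (hmono : Monotone A)
    (hsub : ∀ n, A n ⊆ Set.Icc (0 : ℝ) 1 ×ˢ Set.Icc (0 : ℝ) 1) :
    (⨆ n, sInf {r : ℝ≥0∞ | ∃ f : ℝ → ℝ, Measurable f ∧ (∀ x, f x ∈ Set.Icc (0 : ℝ) 1) ∧
        (∀ x y, (x, y) ∈ A n → 1 ≤ f x + f y) ∧
        r = ENNReal.ofReal (∫ x in Set.Icc (0 : ℝ) 1, f x)})
      = sInf {r : ℝ≥0∞ | ∃ f : ℝ → ℝ, Measurable f ∧ (∀ x, f x ∈ Set.Icc (0 : ℝ) 1) ∧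
          (∀ x y, (x, y) ∈ ⋃ n, A n → 1 ≤ f x + f y) ∧
          r = ENNReal.ofReal (∫ x in Set.Icc (0 : ℝ) 1, f x)} := by
  classical
  set S : Set (ℝ × ℝ) → Set ℝ≥0∞ := fun T =>
    {r : ℝ≥0∞ | ∃ f : ℝ → ℝ, Measurable f ∧ (∀ x, f x ∈ Set.Icc (0 : ℝ) 1) ∧
      (∀ x y, (x, y) ∈ T → 1 ≤ f x + f y) ∧
      r = ENNReal.ofReal (∫ x in Set.Icc (0 : ℝ) 1, f x)} with hS
  show (⨆ n, sInf (S (A n))) = sInf (S (⋃ n, A n))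
  set G : ℝ≥0∞ := ⨆ n, sInf (S (A n)) with hG
  -- the constant 1 function is in every S T
  have hone : ∀ T : Set (ℝ × ℝ), (1:ℝ≥0∞) ∈ S T := by
    intro T
    refine ⟨fun _ => 1, measurable_const, fun x => by norm_num, fun x y _ => by norm_num, ?_⟩
    have : (∫ _ in Set.Icc (0:ℝ) 1, (1:ℝ)) = 1 := by
      simp [Real.volume_Icc]
    rw [this, ENNReal.ofReal_one]
  have hSle : ∀ T : Set (ℝ × ℝ), sInf (S T) ≤ 1 := fun T => sInf_le (hone T)
  have hGle : G ≤ 1 := iSup_le fun n => hSle (A n)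
  -- easy direction
  refine le_antisymm ?_ ?_
  · refine iSup_le fun n => ?_
    refine sInf_le_sInf ?_
    rintro r ⟨f, h1, h2, h3, h4⟩
    exact ⟨f, h1, h2, fun x y hxy => h3 x y (Set.mem_iUnion.2 ⟨n, hxy⟩), h4⟩
  -- hard direction
  refine ENNReal.le_of_forall_pos_le_add fun ε hε hGtop => ?_
  have hGne : G ≠ ⊤ := hGtop.ne
  have hGlt : ∀ n, sInf (S (A n)) < G + ε := by
    intro n
    refine lt_of_le_of_lt (le_iSup (fun n => sInf (S (A n))) n) ?_
    exact ENNReal.lt_add_right hGne (by exact_mod_cast hε.ne')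
  have hchoice : ∀ n, ∃ f : ℝ → ℝ, Measurable f ∧ (∀ x, f x ∈ Set.Icc (0 : ℝ) 1) ∧
      (∀ x y, (x, y) ∈ A n → 1 ≤ f x + f y) ∧
      (∫ x in Set.Icc (0:ℝ) 1, f x) ≤ G.toReal + ε := by
    intro n
    obtain ⟨r, ⟨f, h1, h2, h3, h4⟩, hlt⟩ := sInf_lt_iff.mp (hGlt n)
    refine ⟨f, h1, h2, h3, ?_⟩
    have h0 : 0 ≤ ∫ x in Set.Icc (0:ℝ) 1, f x :=
      integral_nonneg fun x => (h2 x).1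
    have hGe : G + (ε:ℝ≥0∞) = ENNReal.ofReal (G.toReal + ε) := by
      rw [ENNReal.ofReal_add ENNReal.toReal_nonneg ε.coe_nonneg,
        ENNReal.ofReal_toReal hGne, ENNReal.ofReal_coe_nnreal]
    rw [h4, hGe] at hlt
    have hpos : (0:ℝ) < G.toReal + ε := by
      have := ENNReal.toReal_nonneg (a := G)
      have : (0:ℝ) < ε := hε
      positivity
    exact ((ENNReal.ofReal_lt_ofReal_iff hpos).mp hlt).le
  set f : ℕ → ℝ → ℝ := fun n => (hchoice n).choose with hf_def
  have hf1 : ∀ n, Measurable (f n) := fun n => (hchoice n).choose_spec.1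
  have hf2 : ∀ n x, f n x ∈ Set.Icc (0:ℝ) 1 := fun n => (hchoice n).choose_spec.2.1
  have hf3 : ∀ n x y, (x, y) ∈ A n → 1 ≤ f n x + f n y := fun n => (hchoice n).choose_spec.2.2.1
  have hf4 : ∀ n, (∫ x, f n x ∂mu) ≤ G.toReal + ε := fun n => (hchoice n).choose_spec.2.2.2
  obtain ⟨F, hFmeas, hFmem, hFfeas, hFint⟩ := key f hf1 hf2 hf4
  have hFfeas' : ∀ x y, (x, y) ∈ ⋃ n, A n → 1 ≤ F x + F y := by
    intro x y hxy
    obtain ⟨p, hp⟩ := Set.mem_iUnion.mp hxy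
    exact hFfeas x y ⟨p, fun k hk => hf3 k x y (hmono hk hp)⟩
  have hmemS : ENNReal.ofReal (∫ x in Set.Icc (0:ℝ) 1, F x) ∈ S (⋃ n, A n) :=
    ⟨F, hFmeas, hFmem, hFfeas', rfl⟩
  refine le_trans (sInf_le hmemS) ?_
  have : ENNReal.ofReal (∫ x in Set.Icc (0:ℝ) 1, F x) ≤ ENNReal.ofReal (G.toReal + ε) :=
    ENNReal.ofReal_le_ofReal hFint
  refine le_trans this ?_
  rw [ENNReal.ofReal_add ENNReal.toReal_nonneg ε.coe_nonneg,
    ENNReal.ofReal_toReal hGne, ENNReal.ofReal_coe_nnreal]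
end
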